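/- arXiv:0911.1809 — 4 statements merged into one kernel-verified Lean document; each statement's English description precedes it below -/
import Mathlib

section
/- Let {u_1, …, u_m} ⊆ ℤ^d be a nice set of non-zero vectors. There exists a constant N ∈ ℕ, depending only on the set {u_1, …, u_m}, such that for every unit vector l ∈ ℝ^d there exist an integer s ≤ N and vectors x_1, x_2, …, x_s ∈ {u_1, …, u_m} with: (i) (x_1 + ⋯ + x_p)·l ≥ 0 for all 1 ≤ p ≤ s; (ii) the partial sums y_p = x_1 + ⋯ + x_p for 0 ≤ p ≤ s−1 (with y_0 = 0) are pairwise distinct; (iii) x_1 + ⋯ + x_s = 0. -/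
noncomputable section

/-- The natural embedding of the lattice `ℤ^d` into Euclidean space `ℝ^d`. -/
def emb (d : ℕ) (z : Fin d → ℤ) : EuclideanSpace ℝ (Fin d) := WithLp.toLp 2 (fun i => (z i : ℝ))

/-- A finite family `u 0, …, u (m-1)` of lattice vectors is *nice* if for every nonzero
direction `l ∈ ℝ^d` there is some `i` with `l · u i > 0`. -/
def IsNice (d m : ℕ) (u : Fin m → Fin d → ℤ) : Prop :=
  ∀ l : EuclideanSpace ℝ (Fin d), l ≠ 0 → ∃ i : Fin m, 0 < (inner ℝ l (emb d (u i)) : ℝ)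

lemma emb_add (d : ℕ) (a b : Fin d → ℤ) : emb d (a + b) = emb d a + emb d b := by
  ext j; simp [emb]

lemma emb_zero (d : ℕ) : emb d 0 = 0 := by
  ext j; simp [emb]

lemma exists_zero_loop {d m : ℕ} (hd : 0 < d) (u : Fin m → Fin d → ℤ)
    (hnice : IsNice d m u) :
    ∃ s₀ : ℕ, 0 < s₀ ∧ ∃ z : ℕ → Fin d → ℤ,
      (∀ j, ∃ i, z j = u i) ∧ ∑ j ∈ Finset.range s₀, z j = 0 := by
  classical
  haveI : Nonempty (Fin d) := ⟨⟨0, hd⟩⟩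
  -- a unit vector exists
  have hsph : (Metric.sphere (0 : EuclideanSpace ℝ (Fin d)) 1).Nonempty := by
    refine ⟨EuclideanSpace.single ⟨0, hd⟩ (1 : ℝ), ?_⟩
    simp [EuclideanSpace.norm_single]
  -- m is nonempty
  haveI hm : Nonempty (Fin m) := by
    obtain ⟨l₁, hl₁⟩ := hsph
    rw [mem_sphere_zero_iff_norm] at hl₁
    have hl₁' : l₁ ≠ 0 := by
      intro h; rw [h, norm_zero] at hl₁; norm_num at hl₁
    obtain ⟨i, _⟩ := hnice l₁ hl₁'
    exact ⟨i⟩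
  set g : EuclideanSpace ℝ (Fin d) → ℝ :=
    fun l => Finset.univ.sup' Finset.univ_nonempty fun i => (inner ℝ l (emb d (u i)) : ℝ) with hg
  have hgc : ContinuousOn g (Metric.sphere (0 : EuclideanSpace ℝ (Fin d)) 1) := by
    apply ContinuousOn.finset_sup'_apply Finset.univ_nonempty
    intro i _
    exact (continuous_id.inner continuous_const).continuousOn
  obtain ⟨l₀, hl₀, hmin⟩ :=
    (isCompact_sphere (0 : EuclideanSpace ℝ (Fin d)) 1).exists_isMinOn hsph hgc
  set c : ℝ := g l₀ with hcdef
  have hl₀n : ‖l₀‖ = 1 := mem_sphere_zero_iff_norm.mp hl₀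
  have hc : 0 < c := by
    obtain ⟨i, hi⟩ := hnice l₀ (by intro h; rw [h] at hl₀n; simp at hl₀n)
    refine lt_of_lt_of_le hi ?_
    rw [hcdef, hg]
    exact Finset.le_sup' (fun i => (inner ℝ l₀ (emb d (u i)) : ℝ)) (Finset.mem_univ i)
  have hcl : ∀ l : EuclideanSpace ℝ (Fin d), ‖l‖ = 1 → c ≤ g l := by
    intro l hl
    exact hmin (mem_sphere_zero_iff_norm.mpr hl)
  -- direction property
  have hdir : ∀ y : EuclideanSpace ℝ (Fin d), y ≠ 0 →
      ∃ i, (inner ℝ y (emb d (u i)) : ℝ) ≤ -(c * ‖y‖) := by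
    intro y hy
    have hny : 0 < ‖y‖ := norm_pos_iff.mpr hy
    set l : EuclideanSpace ℝ (Fin d) := ‖y‖⁻¹ • (-y) with hldef
    have hln : ‖l‖ = 1 := by
      rw [hldef, norm_smul, norm_neg, norm_inv, norm_norm]
      field_simp
    have hgl := hcl l hln
    obtain ⟨i, _, hi⟩ := Finset.exists_mem_eq_sup' (Finset.univ_nonempty)
      (fun i => (inner ℝ l (emb d (u i)) : ℝ))
    refine ⟨i, ?_⟩
    have : c ≤ (inner ℝ l (emb d (u i)) : ℝ) := by rw [← hi]; exact hgl
    rw [hldef] at this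
    rw [real_inner_smul_left, inner_neg_left] at this
    have h2 : c * ‖y‖ ≤ -(inner ℝ y (emb d (u i)) : ℝ) := by
      have := mul_le_mul_of_nonneg_left this (le_of_lt hny)
      calc c * ‖y‖ = ‖y‖ * c := mul_comm _ _
        _ ≤ ‖y‖ * (‖y‖⁻¹ * -(inner ℝ y (emb d (u i)) : ℝ)) := this
        _ = -(inner ℝ y (emb d (u i)) : ℝ) := by
          rw [← mul_assoc, mul_inv_cancel₀ hny.ne', one_mul]
    linarith
  -- bound on generators
  set U : ℝ := Finset.univ.sup' Finset.univ_nonempty fun i => ‖emb d (u i)‖ with hUdef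
  have hU : ∀ i, ‖emb d (u i)‖ ≤ U := fun i => by
    rw [hUdef]; exact Finset.le_sup' (fun i => ‖emb d (u i)‖) (Finset.mem_univ i)
  have hU0 : 0 ≤ U := le_trans (norm_nonneg _) (hU (Classical.arbitrary _))
  set B : ℝ := U ^ 2 / (2 * c) + U with hBdef
  have hR0 : 0 ≤ U ^ 2 / (2 * c) := by positivity
  have hB0 : 0 ≤ B := by positivity
  -- key step
  have key : ∀ y : Fin d → ℤ, ‖emb d y‖ ≤ B → ∃ i, ‖emb d (y + u i)‖ ≤ B := by
    intro y hy
    rcases le_or_gt ‖emb d y‖ (U ^ 2 / (2 * c)) with hsmall | hbig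
    · refine ⟨Classical.arbitrary _, ?_⟩
      rw [emb_add]
      calc ‖emb d y + emb d (u _)‖ ≤ ‖emb d y‖ + ‖emb d (u _)‖ := norm_add_le _ _
        _ ≤ U ^ 2 / (2 * c) + U := add_le_add hsmall (hU _)
    · have hyne : emb d y ≠ 0 := by
        intro h
        rw [h, norm_zero] at hbig
        exact absurd hbig (not_lt.mpr hR0)
      obtain ⟨i, hi⟩ := hdir (emb d y) hyne
      refine ⟨i, ?_⟩
      rw [emb_add]
      have hsq : ‖emb d y + emb d (u i)‖ ^ 2
          = ‖emb d y‖ ^ 2 + 2 * (inner ℝ (emb d y) (emb d (u i)) : ℝ) + ‖emb d (u i)‖ ^ 2 :=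
        norm_add_sq_real _ _
      have h1 : 2 * c * ‖emb d y‖ > U ^ 2 := by
        have := (div_lt_iff₀ (by positivity : (0:ℝ) < 2 * c)).mp hbig
        linarith
      have h2 : ‖emb d y + emb d (u i)‖ ^ 2 ≤ ‖emb d y‖ ^ 2 := by
        have h3 : ‖emb d (u i)‖ ^ 2 ≤ U ^ 2 := by
          apply pow_le_pow_left₀ (norm_nonneg _) (hU i)
        nlinarith
      have := norm_nonneg (emb d y + emb d (u i))
      nlinarith [hy, norm_nonneg (emb d y)]
  -- the bounded region is finite
  have hTfin : Set.Finite {y : Fin d → ℤ | ‖emb d y‖ ≤ B} := by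
    apply Set.Finite.subset
      (Set.Finite.pi (fun i : Fin d => Set.finite_Icc (-⌈B⌉) ⌈B⌉))
    intro y hy
    simp only [Set.mem_setOf_eq] at hy
    intro j _
    have hcoord : |(y j : ℝ)| ≤ ‖emb d y‖ := by
      have h1 : (inner ℝ (EuclideanSpace.single j (1:ℝ)) (emb d y) : ℝ) = (y j : ℝ) := by
        rw [EuclideanSpace.inner_single_left]
        simp [emb]
      have h2 := abs_real_inner_le_norm (EuclideanSpace.single j (1:ℝ)) (emb d y)
      rw [h1, EuclideanSpace.norm_single] at h2
      simpa using h2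
    have habs : |(y j : ℝ)| ≤ B := le_trans hcoord hy
    constructor
    · have : -(B : ℝ) ≤ (y j : ℝ) := by
        have := neg_abs_le (y j : ℝ); linarith
      have h4 : ((-⌈B⌉ : ℤ) : ℝ) ≤ (y j : ℝ) := by
        push_cast
        linarith [Int.le_ceil B]
      exact_mod_cast h4
    · have : (y j : ℝ) ≤ B := le_trans (le_abs_self _) habs
      have h4 : (y j : ℝ) ≤ ((⌈B⌉ : ℤ) : ℝ) := le_trans this (Int.le_ceil B)
      exact_mod_cast h4
  haveI hfin : Finite {y : Fin d → ℤ // ‖emb d y‖ ≤ B} := hTfin.to_subtype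
  -- the walk
  set w : ℕ → {y : Fin d → ℤ // ‖emb d y‖ ≤ B} := fun k =>
    Nat.rec ⟨0, by rw [emb_zero, norm_zero]; exact hB0⟩
      (fun _ prev => ⟨prev.1 + u (key prev.1 prev.2).choose, (key prev.1 prev.2).choose_spec⟩) k
    with hwdef
  have hstep : ∀ k, ∃ i, (w (k + 1)).1 = (w k).1 + u i := fun k =>
    ⟨(key (w k).1 (w k).2).choose, rfl⟩
  obtain ⟨p', q', hne, he⟩ := Finite.exists_ne_map_eq_of_infinite w
  -- wlog p < q
  obtain ⟨p, q, hpq, heq⟩ : ∃ p q, p < q ∧ (w p).1 = (w q).1 := by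
    rcases lt_or_gt_of_ne hne with h | h
    · exact ⟨p', q', h, congrArg Subtype.val he⟩
    · exact ⟨q', p', h, (congrArg Subtype.val he).symm⟩
  refine ⟨q - p, by omega, fun j => (w (p + (j + 1))).1 - (w (p + j)).1, ?_, ?_⟩
  · intro j
    obtain ⟨i, hi⟩ := hstep (p + j)
    refine ⟨i, ?_⟩
    show (w (p + j + 1)).1 - (w (p + j)).1 = u i
    rw [hi]; abel
  · have h2 : ∑ j ∈ Finset.range (q - p), ((w (p + (j + 1))).1 - (w (p + j)).1)
        = (w (p + (q - p))).1 - (w (p + 0)).1 :=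
      Finset.sum_range_sub (fun j => (w (p + j)).1) (q - p)
    have hq : p + (q - p) = q := by omega
    rw [hq] at h2
    show ∑ j ∈ Finset.range (q - p), ((w (p + (j + 1))).1 - (w (p + j)).1) = 0
    rw [h2]
    show (w q).1 - (w p).1 = 0
    rw [← heq, sub_self]

lemma emb_sum (d : ℕ) {ι : Type*} (s : Finset ι) (f : ι → Fin d → ℤ) :
    emb d (∑ i ∈ s, f i) = ∑ i ∈ s, emb d (f i) := by
  classical
  induction s using Finset.induction_on with
  | empty => simp [emb_zero]
  | insert _ _ h ih => rw [Finset.sum_insert h, Finset.sum_insert h, emb_add, ih]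

lemma prefix_nonneg (n : ℕ) (a : ℕ → ℝ)
    (hmono : ∀ i j, i ≤ j → j < n → a j ≤ a i)
    (hsum : ∑ i ∈ Finset.range n, a i = 0) :
    ∀ p ≤ n, 0 ≤ ∑ i ∈ Finset.range p, a i := by
  intro p hp
  rcases Nat.eq_zero_or_pos p with h0 | h1
  · simp [h0]
  have hpn : p - 1 < n := by omega
  rcases le_or_gt 0 (a (p - 1)) with hpos | hneg
  · apply Finset.sum_nonneg
    intro i hi
    simp only [Finset.mem_range] at hi
    exact le_trans hpos (hmono i (p - 1) (by omega) hpn)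
  · have hsplit : ∑ i ∈ Finset.range p, a i + ∑ i ∈ Finset.Ico p n, a i
        = ∑ i ∈ Finset.range n, a i := Finset.sum_range_add_sum_Ico a hp
    have hico : ∑ i ∈ Finset.Ico p n, a i ≤ 0 := by
      apply Finset.sum_nonpos
      intro i hi
      simp only [Finset.mem_Ico] at hi
      exact le_of_lt (lt_of_le_of_lt (hmono (p - 1) i (by omega) hi.2) hneg)
    linarith [hsplit, hsum]

lemma shift_sum {α : Type*} [AddCommGroup α] (x : ℕ → α) (p Δ : ℕ)
    (heq : ∑ i ∈ Finset.range p, x i = ∑ i ∈ Finset.range (p + Δ), x i) :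
    ∀ r, p ≤ r →
      ∑ i ∈ Finset.range r, (fun j => if j < p then x j else x (j + Δ)) i
        = ∑ i ∈ Finset.range (r + Δ), x i := by
  intro r hr
  induction r, hr using Nat.le_induction with
  | base =>
      rw [← heq]
      exact Finset.sum_congr rfl (fun i hi => by
        simp only [Finset.mem_range] at hi; simp [hi])
  | succ r hr ih =>
      rw [Finset.sum_range_succ, ih]
      have : ¬ r < p := by omega
      simp only [this, if_false]
      have : r + 1 + Δ = (r + Δ) + 1 := by omega
      rw [this, Finset.sum_range_succ]

/-- for a nice set of non-zero vectors there is a uniform bound `N` such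
that in any direction `l` there is a loop of at most `N` steps, using only vectors from the
nice set, staying in the half-space `{v : v · l ≥ 0}`, with pairwise distinct intermediate
points, and returning to the origin. -/
theorem nice_set_loop_in_halfspace {d m : ℕ} (hd : 0 < d)
    (u : Fin m → Fin d → ℤ) (hu : ∀ i, u i ≠ 0) (hnice : IsNice d m u) :
    ∃ N : ℕ, ∀ l : EuclideanSpace ℝ (Fin d), ‖l‖ = 1 →
      ∃ s : ℕ, 0 < s ∧ s ≤ N ∧ ∃ x : ℕ → Fin d → ℤ,
        (∀ j < s, ∃ i : Fin m, x j = u i) ∧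
        (∀ p, 1 ≤ p → p ≤ s → 0 ≤ (inner ℝ l (emb d (∑ i ∈ Finset.range p, x i)) : ℝ)) ∧
        (∀ p < s, ∀ q < s, p ≠ q →
          ∑ i ∈ Finset.range p, x i ≠ ∑ i ∈ Finset.range q, x i) ∧
        ∑ i ∈ Finset.range s, x i = 0 := by
  classical
  obtain ⟨s₀, hs₀, z, hz, hzsum⟩ := exists_zero_loop hd u hnice
  refine ⟨s₀, ?_⟩
  intro l hl
  -- sort the loop in decreasing order of inner product with l
  set v : Fin s₀ → ℝ := fun j => -(inner ℝ l (emb d (z j)) : ℝ) with hv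
  set σ := Tuple.sort v with hσ
  have hmono : Monotone (v ∘ σ) := Tuple.monotone_sort v
  set x0 : ℕ → Fin d → ℤ := fun j => if h : j < s₀ then z (σ ⟨j, h⟩) else 0 with hx0
  have hx0val : ∀ k (hk : k < s₀), x0 k = z (σ ⟨k, hk⟩) := by
    intro k hk; simp only [hx0, dif_pos hk]
  have hsum0 : ∑ i ∈ Finset.range s₀, x0 i = 0 := by
    calc ∑ i ∈ Finset.range s₀, x0 i = ∑ i : Fin s₀, x0 ↑i :=
          (Fin.sum_univ_eq_sum_range x0 s₀).symm
      _ = ∑ i : Fin s₀, z ↑(σ i) := by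
          refine Finset.sum_congr rfl (fun i _ => ?_)
          rw [hx0val ↑i i.isLt]
      _ = ∑ i : Fin s₀, z ↑i := Equiv.sum_comp σ (fun i : Fin s₀ => z ↑i)
      _ = ∑ i ∈ Finset.range s₀, z i := Fin.sum_univ_eq_sum_range z s₀
      _ = 0 := hzsum
  -- the predicate for minimization
  set P : ℕ → Prop := fun s => 0 < s ∧ s ≤ s₀ ∧ ∃ x : ℕ → Fin d → ℤ,
      (∀ j < s, ∃ i, x j = u i) ∧
      (∀ p, 1 ≤ p → p ≤ s → 0 ≤ (inner ℝ l (emb d (∑ i ∈ Finset.range p, x i)) : ℝ)) ∧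
      ∑ i ∈ Finset.range s, x i = 0 with hP
  have hex : ∃ s, P s := by
    refine ⟨s₀, hs₀, le_refl _, x0, ?_, ?_, hsum0⟩
    · intro j hj
      obtain ⟨i, hi⟩ := hz ↑(σ ⟨j, hj⟩)
      exact ⟨i, by rw [hx0val j hj, hi]⟩
    · intro p hp1 hps
      have ha : (inner ℝ l (emb d (∑ i ∈ Finset.range p, x0 i)) : ℝ)
          = ∑ i ∈ Finset.range p, (inner ℝ l (emb d (x0 i)) : ℝ) := by
        rw [emb_sum, inner_sum]
      rw [ha]
      refine prefix_nonneg s₀ (fun i => (inner ℝ l (emb d (x0 i)) : ℝ)) ?_ ?_ p hps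
      · intro i j hij hj
        have hi : i < s₀ := lt_of_le_of_lt hij hj
        have e : ∀ k (hk : k < s₀), (inner ℝ l (emb d (x0 k)) : ℝ) = -(v (σ ⟨k, hk⟩)) := by
          intro k hk
          rw [hx0val k hk]
          simp only [hv, neg_neg]
        rw [e j hj, e i hi]
        exact neg_le_neg (hmono (Fin.mk_le_mk.mpr hij))
      · rw [← inner_sum, ← emb_sum, hsum0, emb_zero, inner_zero_right]
  -- take the minimal length
  have hPs := Nat.find_spec hex
  set s := Nat.find hex with hsdef
  simp only [hP] at hPs
  obtain ⟨hs1, hsN, x, hxsteps, hxpre, hxsum⟩ := hPs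
  have claim : ∀ p q : ℕ, p < q → q < s →
      ∑ i ∈ Finset.range p, x i = ∑ i ∈ Finset.range q, x i → False := by
    intro p q hpq hq heq
    set Δ := q - p with hΔdef
    have hΔ1 : 1 ≤ Δ := by omega
    have hpΔ : p + Δ = q := by omega
    have heq' : ∑ i ∈ Finset.range p, x i = ∑ i ∈ Finset.range (p + Δ), x i := by
      rw [hpΔ]; exact heq
    have hP' : P (s - Δ) := by
      simp only [hP]
      refine ⟨by omega, by omega, fun j => if j < p then x j else x (j + Δ), ?_, ?_, ?_⟩
      · intro j hj
        by_cases hjp : j < p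
        · simpa [hjp] using hxsteps j (by omega)
        · simp only [hjp, if_false]
          exact hxsteps (j + Δ) (by omega)
      · intro r hr1 hrs
        rcases le_or_gt r p with hrp | hrp
        · have hcong : ∑ i ∈ Finset.range r, (fun j => if j < p then x j else x (j + Δ)) i
              = ∑ i ∈ Finset.range r, x i := by
            refine Finset.sum_congr rfl (fun i hi => ?_)
            simp only [Finset.mem_range] at hi
            simp [show i < p by omega]
          rw [hcong]
          exact hxpre r hr1 (by omega)
        · rw [shift_sum x p Δ heq' r (le_of_lt hrp)]
          exact hxpre (r + Δ) (by omega) (by omega)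
      · rw [shift_sum x p Δ heq' (s - Δ) (by omega), show s - Δ + Δ = s by omega]
        exact hxsum
    have hlt : s - Δ < Nat.find hex := by rw [← hsdef]; omega
    exact absurd hP' (Nat.find_min hex hlt)
  refine ⟨s, hs1, hsN, x, hxsteps, hxpre, ?_, hxsum⟩
  intro p hp q hq hne heq
  rcases hne.lt_or_gt with h | h
  · exact claim p q h hq heq
  · exact claim q p h hp heq.symm
end
end

section
/- Fix a unit vector l ∈ ℝ^d and let k, k' be real numbers with 0 < k' < k. Then limsup_{n→∞} (1/n) log ℙ(T_{nk} ≤ n) ≤ limsup_{n→∞} (1/n) log ℙ(T_{nk'} ≤ n, T_{nk'} ≤ D_1), and liminf_{n→∞} (1/n) log ℙ(T_{nk} ≤ n, T_{nk} ≤ D_1) ≤ liminf_{n→∞} (1/n) log ℙ(T_{nk} ≤ n). -/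
open MeasureTheory ProbabilityTheory Filter
open scoped ENNReal

noncomputable section

/-- A stationary `ℤ^d`-valued random field `η` on a probability space `(Ω, P)`, with bounded
steps (i), finite-range dependence of range `M` (ii), and the ellipticity condition (iii)
with respect to a nice set of vectors `u 0, …, u (m-1)`. -/
structure DWRE (d : ℕ) (Ω : Type) [MeasurableSpace Ω] where
  P : Measure Ω
  isProb : IsProbabilityMeasure P
  η : (Fin d → ℤ) → Ω → (Fin d → ℤ)
  meas_η : ∀ z, Measurable (η z)
  stationary : ∀ y : Fin d → ℤ,
    Measure.map (fun ω => fun z => η (z + y) ω) P = Measure.map (fun ω => fun z => η z ω) P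
  L : ℝ
  L_pos : 0 < L
  bounded : ∀ z : Fin d → ℤ, ∀ᵐ ω ∂P, ‖emb d (η z ω)‖ ≤ L
  M : ℝ
  M_pos : 0 < M
  finiteRange : ∀ z : Fin d → ℤ,
    Indep (MeasurableSpace.comap (η z) inferInstance)
      (⨆ w ∈ {w : Fin d → ℤ | M < dist (emb d w) (emb d z)},
        MeasurableSpace.comap (η w) inferInstance) P
  m : ℕ
  u : Fin m → Fin d → ℤ
  nice : IsNice d m u
  c : ℝ
  c_pos : 0 < c
  ellipticity : ∀ (z : Fin d → ℤ) (i : Fin m), ∀ᵐ ω ∂P,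
    c < condExp
      (⨆ w ∈ {w : Fin d → ℤ | w ≠ z ∧ dist (emb d w) (emb d z) ≤ M},
        MeasurableSpace.comap (η w) inferInstance) P
      (Set.indicator {ω' | η z ω' = u i} (fun _ => (1 : ℝ))) ω

attribute [instance] DWRE.isProb

namespace DWRE

variable {d : ℕ} {Ω : Type} [MeasurableSpace Ω]

/-- The deterministic walk in the random environment: `X 0 = 0`, `X (n+1) = X n + η (X n)`. -/
def walk (E : DWRE d Ω) : ℕ → Ω → Fin d → ℤ
  | 0, _ => 0
  | n + 1, ω => walk E n ω + E.η (walk E n ω) ω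

/-- The σ-algebra generated by the variables `η z` for `z ∉ S` within distance `M` of `S`. -/
def Fnear (E : DWRE d Ω) (S : Set (Fin d → ℤ)) : MeasurableSpace Ω :=
  ⨆ w ∈ {w : Fin d → ℤ | w ∉ S ∧ ∃ y ∈ S, dist (emb d w) (emb d y) ≤ E.M},
    MeasurableSpace.comap (E.η w) inferInstance

/-- The hitting time `T_u = inf {n : X n · l ≥ u}` (with value `⊤` if there is no such `n`). -/
def hitT (E : DWRE d Ω) (l : EuclideanSpace ℝ (Fin d)) (u : ℝ) (ω : Ω) : ℕ∞ :=
  sInf {t : ℕ∞ | ∃ n : ℕ, t = (n : ℕ∞) ∧ u ≤ (inner ℝ l (emb d (E.walk n ω)) : ℝ)}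

/-- `D_1`, the time of the first jump of the walk over the hyperplane through the origin
orthogonal to `l`, in the direction of `l`. -/
def D1 (E : DWRE d Ω) (l : EuclideanSpace ℝ (Fin d)) (ω : Ω) : ℕ∞ :=
  sInf {t : ℕ∞ | ∃ n : ℕ, t = (n : ℕ∞) ∧ 1 ≤ n ∧
    (inner ℝ l (emb d (E.walk (n - 1) ω)) : ℝ) < 0 ∧ 0 ≤ (inner ℝ l (emb d (E.walk n ω)) : ℝ)}

/-- `log ℙ(A)`, with `log 0 = -∞`, as an extended real number. -/
def plog (E : DWRE d Ω) (A : Set Ω) : EReal := ENNReal.log (E.P A)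

/-- The sequence `n ↦ (1/n) log ℙ(A n)`, as extended real numbers. -/
def rate (E : DWRE d Ω) (A : ℕ → Set Ω) (n : ℕ) : EReal :=
  (((n : ℝ)⁻¹ : ℝ) : EReal) * E.plog (A n)

/-- `T ≤ x` for an extended natural time `T` and a real bound `x` (in particular `T < ∞`). -/
def timeLE (t : ℕ∞) (x : ℝ) : Prop := ∃ n : ℕ, t = (n : ℕ∞) ∧ (n : ℝ) ≤ x

/-- The sequence `n ↦ (1/n) log 𝔼[exp (λ · X n)]`. -/
def mgfRate (E : DWRE d Ω) (lam : EuclideanSpace ℝ (Fin d)) (n : ℕ) : EReal :=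
  (((n : ℝ)⁻¹ * Real.log (∫ ω, Real.exp ((inner ℝ lam (emb d (E.walk n ω)) : ℝ)) ∂E.P) : ℝ) : EReal)

/-- Convexity for `EReal`-valued functions on `ℝ^d`. -/
def ConvexE {d : ℕ} (f : EuclideanSpace ℝ (Fin d) → EReal) : Prop :=
  ∀ x y : EuclideanSpace ℝ (Fin d), ∀ a b : ℝ, 0 ≤ a → 0 ≤ b → a + b = 1 →
    f (a • x + b • y) ≤ (a : EReal) * f x + (b : EReal) * f y

/-- Concavity for `EReal`-valued functions on `(0, ∞)`. -/
def ConcavePosE (γ : ℝ → EReal) : Prop :=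
  ∀ k₁ k₂ : ℝ, 0 < k₁ → 0 < k₂ → ∀ a b : ℝ, 0 ≤ a → 0 ≤ b → a + b = 1 →
    (a : EReal) * γ k₁ + (b : EReal) * γ k₂ ≤ γ (a * k₁ + b * k₂)

/-- The convex conjugate `Λ*(x) = sup_λ (λ·x − Λ(λ))` of an `EReal`-valued function on `ℝ^d`. -/
def conj {d : ℕ} (Λ : EuclideanSpace ℝ (Fin d) → EReal) (x : EuclideanSpace ℝ (Fin d)) : EReal :=
  ⨆ lam : EuclideanSpace ℝ (Fin d), (((inner ℝ lam x : ℝ)) : EReal) - Λ lam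

end DWRE

open DWRE

variable {d : ℕ} {Ω : Type} [MeasurableSpace Ω]

namespace SW

variable {d : ℕ}

lemma emb_add (a b : Fin d → ℤ) : emb d (a + b) = emb d a + emb d b := by
  ext i; simp [emb]

lemma emb_sub (a b : Fin d → ℤ) : emb d (a - b) = emb d a - emb d b := by
  ext i; simp [emb]

lemma emb_zero : emb d 0 = 0 := by ext i; simp [emb]

lemma abs_coord_le_norm (v : EuclideanSpace ℝ (Fin d)) (i : Fin d) : |v i| ≤ ‖v‖ := by
  rw [EuclideanSpace.norm_eq, ← Real.sqrt_sq_eq_abs]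
  apply Real.sqrt_le_sqrt
  have : v i ^ 2 = ‖v i‖ ^ 2 := by rw [Real.norm_eq_abs, sq_abs]
  rw [this]
  exact Finset.single_le_sum (fun j _ => sq_nonneg ‖v j‖) (Finset.mem_univ i)

def pwalk (e : (Fin d → ℤ) → (Fin d → ℤ)) : ℕ → Fin d → ℤ
  | 0 => 0
  | n + 1 => pwalk e n + e (pwalk e n)

def shiftEnv (x : Fin d → ℤ) (e : (Fin d → ℤ) → (Fin d → ℤ)) :
    (Fin d → ℤ) → (Fin d → ℤ) := fun z => e (z + x)

lemma pwalk_shift (e : (Fin d → ℤ) → (Fin d → ℤ)) (σ : ℕ) :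
    ∀ s, pwalk (shiftEnv (pwalk e σ) e) s = pwalk e (σ + s) - pwalk e σ
  | 0 => by simp [pwalk]
  | s + 1 => by
      have ih := pwalk_shift e σ s
      show pwalk (shiftEnv (pwalk e σ) e) s + _ = _
      rw [ih]
      simp only [shiftEnv, sub_add_cancel]
      have : σ + (s + 1) = (σ + s) + 1 := by omega
      rw [this]
      show _ = pwalk e (σ + s) + e (pwalk e (σ + s)) - pwalk e σ
      abel

lemma norm_pwalk_le {e : (Fin d → ℤ) → (Fin d → ℤ)} {L : ℝ}
    (hL : ∀ z, ‖emb d (e z)‖ ≤ L) : ∀ s : ℕ, ‖emb d (pwalk e s)‖ ≤ s * L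
  | 0 => by simp [pwalk, emb_zero]
  | s + 1 => by
      have ih := norm_pwalk_le hL s
      show ‖emb d (pwalk e s + e (pwalk e s))‖ ≤ _
      rw [emb_add]
      calc ‖emb d (pwalk e s) + emb d (e (pwalk e s))‖
          ≤ ‖emb d (pwalk e s)‖ + ‖emb d (e (pwalk e s))‖ := norm_add_le _ _
        _ ≤ s * L + L := add_le_add ih (hL _)
        _ = (s + 1 : ℕ) * L := by push_cast; ring

/-- pure hitting time -/
def phit (l : EuclideanSpace ℝ (Fin d)) (e : (Fin d → ℤ) → (Fin d → ℤ)) (u : ℝ) : ℕ∞ :=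
  sInf {t : ℕ∞ | ∃ n : ℕ, t = (n : ℕ∞) ∧ u ≤ (inner ℝ l (emb d (pwalk e n)) : ℝ)}

/-- pure D1 -/
def pD1 (l : EuclideanSpace ℝ (Fin d)) (e : (Fin d → ℤ) → (Fin d → ℤ)) : ℕ∞ :=
  sInf {t : ℕ∞ | ∃ n : ℕ, t = (n : ℕ∞) ∧ 1 ≤ n ∧
    (inner ℝ l (emb d (pwalk e (n - 1))) : ℝ) < 0 ∧ 0 ≤ (inner ℝ l (emb d (pwalk e n)) : ℝ)}

lemma phit_le_nat {l : EuclideanSpace ℝ (Fin d)} {e : (Fin d → ℤ) → (Fin d → ℤ)} {u : ℝ} {n : ℕ} :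
    phit l e u ≤ (n : ℕ∞) ↔ ∃ m ≤ n, u ≤ (inner ℝ l (emb d (pwalk e m)) : ℝ) := by
  constructor
  · intro h
    set S : Set ℕ∞ := {t : ℕ∞ | ∃ m : ℕ, t = (m : ℕ∞) ∧ u ≤ (inner ℝ l (emb d (pwalk e m)) : ℝ)}
    have hne : S.Nonempty := by
      by_contra hS
      rw [Set.not_nonempty_iff_eq_empty] at hS
      have : phit l e u = ⊤ := by
        show sInf S = ⊤
        rw [hS, sInf_empty]
      rw [this] at h
      exact absurd (lt_of_lt_of_le (WithTop.coe_lt_top n) h) (lt_irrefl _)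
    obtain ⟨m, hm, hcond⟩ := csInf_mem hne
    refine ⟨m, ?_, hcond⟩
    have : (m : ℕ∞) ≤ (n : ℕ∞) := by rw [← hm]; exact h
    exact_mod_cast this
  · rintro ⟨m, hm, hcond⟩
    calc phit l e u ≤ (m : ℕ∞) := sInf_le ⟨m, rfl, hcond⟩
      _ ≤ (n : ℕ∞) := by exact_mod_cast hm

lemma phit_pD1_of_path (l : EuclideanSpace ℝ (Fin d)) (e : (Fin d → ℤ) → (Fin d → ℤ)) (u : ℝ)
    (n T : ℕ) (hT : T ≤ n) (hhit : u ≤ (inner ℝ l (emb d (pwalk e T)) : ℝ))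
    (hpos : ∀ s ≤ T, 0 ≤ (inner ℝ l (emb d (pwalk e s)) : ℝ)) :
    phit l e u ≤ (n : ℕ∞) ∧ phit l e u ≤ pD1 l e := by
  have h1 : phit l e u ≤ (T : ℕ∞) := sInf_le ⟨T, rfl, hhit⟩
  constructor
  · exact h1.trans (by exact_mod_cast hT)
  · refine le_sInf ?_
    rintro t ⟨j, rfl, hj1, hneg, -⟩
    have hjT : T < j - 1 := by
      by_contra hc
      push_neg at hc
      exact absurd (hpos _ hc) (not_le.mpr hneg)
    exact h1.trans (by exact_mod_cast (by omega : T ≤ j))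

lemma measurable_pwalk (s : ℕ) :
    Measurable (fun e : (Fin d → ℤ) → (Fin d → ℤ) => pwalk e s) := by
  induction s with
  | zero => exact measurable_const
  | succ s ih =>
    apply measurable_to_countable'
    intro v
    have : (fun e : (Fin d → ℤ) → (Fin d → ℤ) => pwalk e (s+1)) ⁻¹' {v} =
        ⋃ a : Fin d → ℤ, ((fun e => pwalk e s) ⁻¹' {a} ∩
          (fun e : (Fin d → ℤ) → (Fin d → ℤ) => e a) ⁻¹' {v - a}) := by
      ext e
      simp only [Set.mem_preimage, Set.mem_singleton_iff, Set.mem_iUnion, Set.mem_inter_iff]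
      constructor
      · intro h
        exact ⟨pwalk e s, rfl, by
          show e _ = _
          rw [← h]
          show e _ = pwalk e s + e (pwalk e s) - pwalk e s
          abel⟩
      · rintro ⟨a, ha, hv⟩
        show pwalk e s + e (pwalk e s) = v
        subst ha
        rw [hv]; abel
    rw [this]
    exact MeasurableSet.iUnion fun a =>
      (ih (Set.to_countable _).measurableSet).inter
        ((measurable_pi_apply a) (Set.to_countable _).measurableSet)

lemma measurableSet_pwalk_event (s : ℕ) (p : (Fin d → ℤ) → Prop) :
    MeasurableSet {e : (Fin d → ℤ) → (Fin d → ℤ) | p (pwalk e s)} :=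
  (measurable_pwalk s) (Set.to_countable _).measurableSet

lemma measurableSet_phit_le (l : EuclideanSpace ℝ (Fin d)) (u : ℝ) (n : ℕ) :
    MeasurableSet {e : (Fin d → ℤ) → (Fin d → ℤ) | phit l e u ≤ (n : ℕ∞)} := by
  have : {e : (Fin d → ℤ) → (Fin d → ℤ) | phit l e u ≤ (n : ℕ∞)} =
      ⋃ m : ℕ, ⋃ _ : m ≤ n,
        {e : (Fin d → ℤ) → (Fin d → ℤ) | u ≤ (inner ℝ l (emb d (pwalk e m)) : ℝ)} := by
    ext e
    simp only [Set.mem_setOf_eq, Set.mem_iUnion, phit_le_nat]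
    tauto
  rw [this]
  exact MeasurableSet.iUnion fun m => MeasurableSet.iUnion fun _ =>
    measurableSet_pwalk_event m (fun v => u ≤ (inner ℝ l (emb d v) : ℝ))

lemma measurableSet_phit_le_pD1 (l : EuclideanSpace ℝ (Fin d)) (u : ℝ) :
    MeasurableSet {e : (Fin d → ℤ) → (Fin d → ℤ) | phit l e u ≤ pD1 l e} := by
  have : {e : (Fin d → ℤ) → (Fin d → ℤ) | phit l e u ≤ pD1 l e} =
      ⋂ j : ℕ, ({e : (Fin d → ℤ) → (Fin d → ℤ) | 1 ≤ j ∧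
          (inner ℝ l (emb d (pwalk e (j - 1))) : ℝ) < 0 ∧
          0 ≤ (inner ℝ l (emb d (pwalk e j)) : ℝ)})ᶜ ∪
        {e : (Fin d → ℤ) → (Fin d → ℤ) | phit l e u ≤ (j : ℕ∞)} := by
    ext e
    simp only [Set.mem_setOf_eq, Set.mem_iInter, Set.mem_union, Set.mem_compl_iff]
    constructor
    · intro h j
      by_cases hc : 1 ≤ j ∧ (inner ℝ l (emb d (pwalk e (j - 1))) : ℝ) < 0 ∧
          0 ≤ (inner ℝ l (emb d (pwalk e j)) : ℝ)
      · exact Or.inr (h.trans (sInf_le ⟨j, rfl, hc.1, hc.2.1, hc.2.2⟩))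
      · exact Or.inl hc
    · intro h
      refine le_sInf ?_
      rintro t ⟨j, rfl, hj1, hneg, hnn⟩
      rcases h j with h' | h'
      · exact absurd ⟨hj1, hneg, hnn⟩ h'
      · exact h'
  rw [this]
  refine MeasurableSet.iInter fun j => MeasurableSet.union ?_ (measurableSet_phit_le l u j)
  refine MeasurableSet.compl ?_
  have : {e : (Fin d → ℤ) → (Fin d → ℤ) | 1 ≤ j ∧
      (inner ℝ l (emb d (pwalk e (j - 1))) : ℝ) < 0 ∧
      0 ≤ (inner ℝ l (emb d (pwalk e j)) : ℝ)} =
      {e : (Fin d → ℤ) → (Fin d → ℤ) | 1 ≤ j} ∩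
      ({e : (Fin d → ℤ) → (Fin d → ℤ) | (inner ℝ l (emb d (pwalk e (j - 1))) : ℝ) < 0} ∩
       {e : (Fin d → ℤ) → (Fin d → ℤ) | 0 ≤ (inner ℝ l (emb d (pwalk e j)) : ℝ)}) := by
    rfl
  rw [this]
  exact (MeasurableSet.const _).inter
    ((measurableSet_pwalk_event (j - 1) (fun v => (inner ℝ l (emb d v) : ℝ) < 0)).inter
      (measurableSet_pwalk_event j (fun v => 0 ≤ (inner ℝ l (emb d v) : ℝ))))

/-- The pathwise restart construction. -/
lemma pathwise {l : EuclideanSpace ℝ (Fin d)} {e : (Fin d → ℤ) → (Fin d → ℤ)} {L : ℝ}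
    (hL : ∀ z, ‖emb d (e z)‖ ≤ L) {n : ℕ} {k k' : ℝ} (hkk : k' ≤ k)
    (h : ∃ T ≤ n, (n : ℝ) * k ≤ (inner ℝ l (emb d (pwalk e T)) : ℝ)) :
    ∃ x : Fin d → ℤ, (∀ i, |((x i : ℤ) : ℝ)| ≤ (n : ℝ) * L) ∧
      phit l (shiftEnv x e) ((n : ℝ) * k') ≤ (n : ℕ∞) ∧
      phit l (shiftEnv x e) ((n : ℝ) * k') ≤ pD1 l (shiftEnv x e) := by
  obtain ⟨T, hTn, hTk⟩ := h
  set f : ℕ → ℝ := fun s => (inner ℝ l (emb d (pwalk e s)) : ℝ) with hf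
  obtain ⟨σ, hσmem, hσmin⟩ := Finset.exists_min_image (Finset.range (T + 1)) f
    ⟨0, Finset.mem_range.mpr (by omega)⟩
  have hσT : σ ≤ T := by
    have := Finset.mem_range.mp hσmem; omega
  have hL0 : 0 ≤ L := le_trans (norm_nonneg _) (hL 0)
  refine ⟨pwalk e σ, ?_, ?_⟩
  · intro i
    have h1 : ‖emb d (pwalk e σ)‖ ≤ (σ : ℝ) * L := norm_pwalk_le hL σ
    have h2 : |((pwalk e σ i : ℤ) : ℝ)| ≤ ‖emb d (pwalk e σ)‖ :=
      abs_coord_le_norm (emb d (pwalk e σ)) i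
    calc |((pwalk e σ i : ℤ) : ℝ)| ≤ (σ : ℝ) * L := h2.trans h1
      _ ≤ (n : ℝ) * L := by
          apply mul_le_mul_of_nonneg_right _ hL0
          exact_mod_cast (hσT.trans hTn)
  · have hkey := pwalk_shift e σ
    have hf' : ∀ s, (inner ℝ l (emb d (pwalk (shiftEnv (pwalk e σ) e) s)) : ℝ) =
        f (σ + s) - f σ := by
      intro s
      rw [hkey s, emb_sub, inner_sub_right]
    have hfσ0 : f σ ≤ 0 := by
      have h0 : f 0 = 0 := by
        show (inner ℝ l (emb d (pwalk e 0)) : ℝ) = 0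
        show (inner ℝ l (emb d 0) : ℝ) = 0
        rw [emb_zero, inner_zero_right]
      have := hσmin 0 (Finset.mem_range.mpr (by omega))
      linarith
    apply phit_pD1_of_path l _ _ n (T - σ) (by omega)
    · rw [hf']
      have : σ + (T - σ) = T := by omega
      rw [this]
      have hnk : (n : ℝ) * k' ≤ (n : ℝ) * k :=
        mul_le_mul_of_nonneg_left hkk (Nat.cast_nonneg n)
      have : (n : ℝ) * k ≤ f T := hTk
      linarith
    · intro s hs
      rw [hf']
      have hmem : σ + s ∈ Finset.range (T + 1) := Finset.mem_range.mpr (by omega)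
      have := hσmin (σ + s) hmem
      linarith

end SW

namespace SW

variable {d : ℕ} {Ω : Type} [MeasurableSpace Ω]

/-- The environment field of a DWRE. -/
def fieldOf (E : DWRE d Ω) (ω : Ω) : (Fin d → ℤ) → (Fin d → ℤ) := fun z => E.η z ω

lemma walk_eq (E : DWRE d Ω) (ω : Ω) : ∀ n, E.walk n ω = pwalk (fieldOf E ω) n
  | 0 => rfl
  | n + 1 => by
      show E.walk n ω + E.η (E.walk n ω) ω = pwalk (fieldOf E ω) n + _
      rw [walk_eq E ω n]
      rfl

lemma hitT_eq (E : DWRE d Ω) (l : EuclideanSpace ℝ (Fin d)) (u : ℝ) (ω : Ω) :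
    E.hitT l u ω = phit l (fieldOf E ω) u := by
  unfold DWRE.hitT phit
  congr 1
  ext t
  simp_rw [walk_eq]

lemma D1_eq (E : DWRE d Ω) (l : EuclideanSpace ℝ (Fin d)) (ω : Ω) :
    E.D1 l ω = pD1 l (fieldOf E ω) := by
  unfold DWRE.D1 pD1
  congr 1
  ext t
  simp_rw [walk_eq]

lemma measurable_fieldOf (E : DWRE d Ω) : Measurable (fieldOf E) :=
  measurable_pi_lambda _ fun z => E.meas_η z

lemma shift_prob (E : DWRE d Ω) (x : Fin d → ℤ) {A : Set ((Fin d → ℤ) → (Fin d → ℤ))}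
    (hA : MeasurableSet A) :
    E.P ((fun ω => shiftEnv x (fieldOf E ω)) ⁻¹' A) = E.P (fieldOf E ⁻¹' A) := by
  have h1 : Measurable (fun ω => fun z => E.η (z + x) ω) :=
    measurable_pi_lambda _ fun z => E.meas_η (z + x)
  have heq : (fun ω => shiftEnv x (fieldOf E ω)) = fun ω => fun z => E.η (z + x) ω := rfl
  rw [heq, ← Measure.map_apply h1 hA, E.stationary x]
  exact Measure.map_apply (measurable_fieldOf E) hA

/-- The key measure estimate via the union bound over the shift. -/
lemma measure_bound (E : DWRE d Ω) (l : EuclideanSpace ℝ (Fin d)) (k k' : ℝ) (hkk : k' ≤ k)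
    (n : ℕ) :
    E.P {ω | E.hitT l ((n : ℝ) * k) ω ≤ (n : ℕ∞)} ≤
      ((Finset.Icc (fun _ => -⌈(n : ℝ) * E.L⌉ : Fin d → ℤ) (fun _ => ⌈(n : ℝ) * E.L⌉)).card
          : ℝ≥0∞) *
        E.P {ω | E.hitT l ((n : ℝ) * k') ω ≤ (n : ℕ∞) ∧
          E.hitT l ((n : ℝ) * k') ω ≤ E.D1 l ω} := by
  classical
  set B : ℤ := ⌈(n : ℝ) * E.L⌉ with hB
  set Box : Finset (Fin d → ℤ) := Finset.Icc (fun _ => -B) (fun _ => B) with hBox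
  set A : Set ((Fin d → ℤ) → (Fin d → ℤ)) :=
    {e | phit l e ((n : ℝ) * k') ≤ (n : ℕ∞) ∧ phit l e ((n : ℝ) * k') ≤ pD1 l e} with hA
  have hAm : MeasurableSet A :=
    (measurableSet_phit_le l _ n).inter (measurableSet_phit_le_pD1 l _)
  set G : Set Ω := {ω | ∀ z : Fin d → ℤ, ‖emb d (E.η z ω)‖ ≤ E.L} with hG
  have hGc : E.P Gᶜ = 0 := by
    have hae : ∀ᵐ ω ∂E.P, ∀ z : Fin d → ℤ, ‖emb d (E.η z ω)‖ ≤ E.L :=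
      ae_all_iff.mpr E.bounded
    rw [ae_iff] at hae
    have : Gᶜ = {ω | ¬ ∀ z : Fin d → ℤ, ‖emb d (E.η z ω)‖ ≤ E.L} := rfl
    rw [this]
    exact hae
  have hsub : {ω | E.hitT l ((n : ℝ) * k) ω ≤ (n : ℕ∞)} ⊆
      Gᶜ ∪ ⋃ x ∈ Box, (fun ω => shiftEnv x (fieldOf E ω)) ⁻¹' A := by
    intro ω hω
    by_cases hωG : ω ∈ G
    · right
      have hhit : phit l (fieldOf E ω) ((n : ℝ) * k) ≤ (n : ℕ∞) := by
        rw [← hitT_eq]; exact hω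
      obtain ⟨x, hx1, hx2, hx3⟩ := pathwise (fun z => hωG z) hkk (phit_le_nat.mp hhit)
      have hxBox : x ∈ Box := by
        rw [hBox, Finset.mem_Icc]
        constructor
        · intro i
          have := hx1 i
          have h2 : -((B : ℤ) : ℝ) ≤ (x i : ℝ) := by
            have hceil : (n : ℝ) * E.L ≤ (B : ℝ) := Int.le_ceil _
            have := abs_le.mp (hx1 i)
            linarith [this.1]
          exact_mod_cast h2
        · intro i
          have h2 : ((x i : ℤ) : ℝ) ≤ (B : ℝ) := by
            have hceil : (n : ℝ) * E.L ≤ (B : ℝ) := Int.le_ceil _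
            have := abs_le.mp (hx1 i)
            linarith [this.2]
          exact_mod_cast h2
      exact Set.mem_biUnion hxBox ⟨hx2, hx3⟩
    · left; exact hωG
  calc E.P {ω | E.hitT l ((n : ℝ) * k) ω ≤ (n : ℕ∞)}
      ≤ E.P (Gᶜ ∪ ⋃ x ∈ Box, (fun ω => shiftEnv x (fieldOf E ω)) ⁻¹' A) :=
        measure_mono hsub
    _ ≤ E.P Gᶜ + E.P (⋃ x ∈ Box, (fun ω => shiftEnv x (fieldOf E ω)) ⁻¹' A) :=
        measure_union_le _ _
    _ = E.P (⋃ x ∈ Box, (fun ω => shiftEnv x (fieldOf E ω)) ⁻¹' A) := by rw [hGc, zero_add]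
    _ ≤ ∑ x ∈ Box, E.P ((fun ω => shiftEnv x (fieldOf E ω)) ⁻¹' A) :=
        measure_biUnion_finset_le _ _
    _ = ∑ _x ∈ Box, E.P (fieldOf E ⁻¹' A) := by
        apply Finset.sum_congr rfl
        intro x _
        exact shift_prob E x hAm
    _ = (Box.card : ℝ≥0∞) * E.P (fieldOf E ⁻¹' A) := by
        rw [Finset.sum_const, nsmul_eq_mul]
    _ = (Box.card : ℝ≥0∞) * E.P {ω | E.hitT l ((n : ℝ) * k') ω ≤ (n : ℕ∞) ∧
          E.hitT l ((n : ℝ) * k') ω ≤ E.D1 l ω} := by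
        congr 1
        apply congrArg
        ext ω
        simp only [Set.mem_preimage, hA, Set.mem_setOf_eq, hitT_eq, D1_eq]

lemma ereal_mul_add_aux (a r : ℝ) (ha : 0 ≤ a) (y : EReal) (hy : y ≠ ⊤) :
    (a : EReal) * ((r : EReal) + y) = ((a * r : ℝ) : EReal) + (a : EReal) * y := by
  induction y with
  | bot =>
    rcases eq_or_lt_of_le ha with h | h
    · rw [← h]
      simp
    · rw [EReal.add_bot, EReal.coe_mul_bot_of_pos h, EReal.add_bot]
  | coe y =>
    norm_cast
    ring
  | top => exact absurd rfl hy

lemma tendsto_log_lin (K : ℝ) (hK : 0 < K) :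
    Filter.Tendsto (fun n : ℕ => Real.log (K * n) / n) Filter.atTop (nhds 0) := by
  have h0 : Filter.Tendsto (fun x : ℝ => Real.log (K * x) / x) Filter.atTop (nhds 0) := by
    have h1 : Filter.Tendsto (fun x : ℝ => Real.log K / x) Filter.atTop (nhds 0) :=
      tendsto_const_nhds.div_atTop Filter.tendsto_id
    have h2 : Filter.Tendsto (fun x : ℝ => Real.log x / x) Filter.atTop (nhds 0) :=
      Real.isLittleO_log_id_atTop.tendsto_div_nhds_zero
    have h3 := h1.add h2
    rw [add_zero] at h3
    apply h3.congr'
    filter_upwards [Filter.eventually_gt_atTop (0 : ℝ)] with x hx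
    rw [Real.log_mul (ne_of_gt hK) (ne_of_gt hx), add_div]
  exact h0.comp tendsto_natCast_atTop_atTop

end SW


/-- Lemma `second_lemma`: comparison of the rates of `{T_{nk} ≤ n}` with
the rates of the no-backtracking events `{T_{nk'} ≤ n, T_{nk'} ≤ D_1}`. -/
theorem rate_comparison_no_backtrack (hd : 0 < d) (E : DWRE d Ω)
    (l : EuclideanSpace ℝ (Fin d)) (hl : ‖l‖ = 1) (k k' : ℝ) (hk' : 0 < k') (hkk : k' < k) :
    (Filter.limsup
        (E.rate fun n => {ω | E.hitT l ((n : ℝ) * k) ω ≤ (n : ℕ∞)}) Filter.atTop ≤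
      Filter.limsup
        (E.rate fun n => {ω | E.hitT l ((n : ℝ) * k') ω ≤ (n : ℕ∞) ∧
          E.hitT l ((n : ℝ) * k') ω ≤ E.D1 l ω}) Filter.atTop) ∧
    Filter.liminf
        (E.rate fun n => {ω | E.hitT l ((n : ℝ) * k) ω ≤ (n : ℕ∞) ∧
          E.hitT l ((n : ℝ) * k) ω ≤ E.D1 l ω}) Filter.atTop ≤
      Filter.liminf
        (E.rate fun n => {ω | E.hitT l ((n : ℝ) * k) ω ≤ (n : ℕ∞)}) Filter.atTop := by
  classical
  constructor
  · -- first (hard) inequality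
    set Bce : ℕ → ℤ := fun n => ⌈(n : ℝ) * E.L⌉ with hBce
    set c : ℕ → ℕ := fun n =>
      (Finset.Icc (fun _ => -Bce n : Fin d → ℤ) (fun _ => Bce n)).card with hc
    set ε : ℕ → ℝ := fun n => (n : ℝ)⁻¹ * Real.log (c n) with hε
    have hB0 : ∀ n, 0 ≤ Bce n := fun n =>
      Int.ceil_nonneg (mul_nonneg (Nat.cast_nonneg n) E.L_pos.le)
    have hcnat : ∀ n : ℕ, c n = (2 * Bce n + 1).toNat ^ d := by
      intro n
      rw [hc]
      show (Finset.Icc (fun _ => -Bce n : Fin d → ℤ) (fun _ => Bce n)).card = _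
      rw [Pi.card_Icc]
      have : ∀ i : Fin d, (Finset.Icc ((fun _ => -Bce n : Fin d → ℤ) i)
          ((fun _ => Bce n : Fin d → ℤ) i)).card = (2 * Bce n + 1).toNat := by
        intro i
        rw [Int.card_Icc]
        congr 1
        ring
      rw [Finset.prod_congr rfl (fun i _ => this i), Finset.prod_const,
        Finset.card_univ, Fintype.card_fin]
    have hc1 : ∀ n, 1 ≤ c n := by
      intro n
      rw [hcnat n]
      apply Nat.one_le_pow
      have : (1 : ℤ) ≤ 2 * Bce n + 1 := by have := hB0 n; omega
      omega
    -- the rate comparison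
    have hrate : ∀ n : ℕ, 1 ≤ n →
        E.rate (fun n => {ω | E.hitT l ((n : ℝ) * k) ω ≤ (n : ℕ∞)}) n ≤
          ((ε n : ℝ) : EReal) +
          E.rate (fun n => {ω | E.hitT l ((n : ℝ) * k') ω ≤ (n : ℕ∞) ∧
            E.hitT l ((n : ℝ) * k') ω ≤ E.D1 l ω}) n := by
      intro n hn
      have hmb := SW.measure_bound E l k k' hkk.le n
      have hlog := ENNReal.log_monotone hmb
      rw [ENNReal.log_mul_add] at hlog
      have hcast : ENNReal.log ((c n : ℝ≥0∞)) = ((Real.log (c n) : ℝ) : EReal) := by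
        rw [ENNReal.log_pos_real (by exact_mod_cast (Nat.pos_of_ne_zero
          (by have := hc1 n; omega)).ne') (ENNReal.natCast_ne_top _)]
        rw [ENNReal.toReal_natCast]
      rw [hcast] at hlog
      have hinv : (0 : ℝ) ≤ (n : ℝ)⁻¹ := inv_nonneg.mpr (Nat.cast_nonneg n)
      have hnotop : E.plog {ω | E.hitT l ((n : ℝ) * k') ω ≤ (n : ℕ∞) ∧
          E.hitT l ((n : ℝ) * k') ω ≤ E.D1 l ω} ≠ ⊤ := by
        rw [DWRE.plog]
        rw [ne_eq, ENNReal.log_eq_top_iff]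
        exact measure_ne_top E.P _
      show (((n : ℝ)⁻¹ : ℝ) : EReal) * E.plog _ ≤ _
      calc (((n : ℝ)⁻¹ : ℝ) : EReal) * E.plog {ω | E.hitT l ((n : ℝ) * k) ω ≤ (n : ℕ∞)}
          ≤ (((n : ℝ)⁻¹ : ℝ) : EReal) * (((Real.log (c n) : ℝ) : EReal) +
            E.plog {ω | E.hitT l ((n : ℝ) * k') ω ≤ (n : ℕ∞) ∧
              E.hitT l ((n : ℝ) * k') ω ≤ E.D1 l ω}) := by
            apply mul_le_mul_of_nonneg_left _ (EReal.coe_nonneg.mpr hinv)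
            exact hlog
        _ = ((ε n : ℝ) : EReal) + (((n : ℝ)⁻¹ : ℝ) : EReal) *
            E.plog {ω | E.hitT l ((n : ℝ) * k') ω ≤ (n : ℕ∞) ∧
              E.hitT l ((n : ℝ) * k') ω ≤ E.D1 l ω} :=
            SW.ereal_mul_add_aux _ _ hinv _ hnotop
    -- ε tends to 0
    have hεtends : Filter.Tendsto ε Filter.atTop (nhds 0) := by
      set K : ℝ := 2 * E.L + 3 with hK
      have hKpos : 0 < K := by have := E.L_pos; rw [hK]; linarith
      have hg : Filter.Tendsto (fun n : ℕ => (d : ℝ) * (Real.log (K * n) / n))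
          Filter.atTop (nhds 0) := by
        have := (SW.tendsto_log_lin K hKpos).const_mul (d : ℝ)
        rwa [mul_zero] at this
      apply squeeze_zero' ?_ ?_ hg
      · filter_upwards with n
        exact mul_nonneg (inv_nonneg.mpr (Nat.cast_nonneg n))
          (Real.log_nonneg (by exact_mod_cast hc1 n))
      · filter_upwards [Filter.eventually_ge_atTop 1] with n hn
        have hBn : ((2 * Bce n + 1).toNat : ℝ) ≤ K * n := by
          have h1 : ((2 * Bce n + 1).toNat : ℤ) = 2 * Bce n + 1 :=
            Int.toNat_of_nonneg (by have := hB0 n; omega)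
          have h2 : ((Bce n : ℤ) : ℝ) < (n : ℝ) * E.L + 1 := Int.ceil_lt_add_one _
          have h3 : (1 : ℝ) ≤ (n : ℝ) := by exact_mod_cast hn
          have h4 : (((2 * Bce n + 1).toNat : ℤ) : ℝ) = ((2 * Bce n + 1 : ℤ) : ℝ) := by
            rw [h1]
          push_cast at h4 ⊢
          rw [h4, hK]
          nlinarith [E.L_pos]
        have hBpos : (0 : ℝ) < ((2 * Bce n + 1).toNat : ℝ) := by
          have : (1 : ℤ) ≤ 2 * Bce n + 1 := by have := hB0 n; omega
          have : (1 : ℕ) ≤ (2 * Bce n + 1).toNat := by omega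
          exact_mod_cast this
        have hlogc : Real.log (c n) ≤ (d : ℝ) * Real.log (K * n) := by
          rw [hcnat n]
          push_cast
          rw [Real.log_pow]
          apply mul_le_mul_of_nonneg_left _ (Nat.cast_nonneg d)
          exact Real.log_le_log hBpos hBn
        rw [hε]
        show (n : ℝ)⁻¹ * Real.log (c n) ≤ (d : ℝ) * (Real.log (K * n) / n)
        calc (n : ℝ)⁻¹ * Real.log (c n) ≤ (n : ℝ)⁻¹ * ((d : ℝ) * Real.log (K * n)) :=
              mul_le_mul_of_nonneg_left hlogc (inv_nonneg.mpr (Nat.cast_nonneg n))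
          _ = (d : ℝ) * (Real.log (K * n) / n) := by
              rw [div_eq_mul_inv]; ring
    -- limsup comparison
    set fL := E.rate (fun n => {ω | E.hitT l ((n : ℝ) * k) ω ≤ (n : ℕ∞)}) with hfL
    set fR := E.rate (fun n => {ω | E.hitT l ((n : ℝ) * k') ω ≤ (n : ℕ∞) ∧
      E.hitT l ((n : ℝ) * k') ω ≤ E.D1 l ω}) with hfR
    apply le_of_forall_gt_imp_ge_of_dense
    intro b hb
    obtain ⟨cmid, hc1', hc2'⟩ := exists_between hb
    obtain ⟨cmid', hcc', hc'b⟩ := exists_between hc2'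
    have hcne_top : cmid ≠ ⊤ := (hcc'.trans_le le_top).ne
    have hcne_bot : cmid ≠ ⊥ := (lt_of_le_of_lt bot_le hc1').ne'
    have hc'ne_top : cmid' ≠ ⊤ := (hc'b.trans_le le_top).ne
    have hc'ne_bot : cmid' ≠ ⊥ := (lt_of_le_of_lt bot_le (hc1'.trans hcc')).ne'
    set cr : ℝ := cmid.toReal with hcr
    set cr' : ℝ := cmid'.toReal with hcr'
    have hcrc : (cr : EReal) = cmid := EReal.coe_toReal hcne_top hcne_bot
    have hcrc' : (cr' : EReal) = cmid' := EReal.coe_toReal hc'ne_top hc'ne_bot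
    have hδ : 0 < cr' - cr := by
      have : (cr : EReal) < (cr' : EReal) := by rw [hcrc, hcrc']; exact hcc'
      rw [EReal.coe_lt_coe_iff] at this
      linarith
    have hev : ∀ᶠ n in Filter.atTop, fL n ≤ (cr' : EReal) := by
      filter_upwards [Filter.eventually_ge_atTop 1,
        hεtends.eventually_lt_const hδ,
        eventually_lt_of_limsup_lt (hcrc ▸ hc1' : Filter.limsup fR Filter.atTop < (cr : EReal))]
        with n hn hεn hfRn
      calc fL n ≤ ((ε n : ℝ) : EReal) + fR n := hrate n hn
        _ ≤ ((cr' - cr : ℝ) : EReal) + (cr : EReal) :=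
            add_le_add (EReal.coe_le_coe_iff.mpr hεn.le) hfRn.le
        _ = (cr' : EReal) := by
            rw [← EReal.coe_add]
            norm_num
    exact (limsup_le_of_le (by isBoundedDefault) hev).trans
      (by rw [← hcrc'] at hc'b; exact hc'b.le)
  · -- second inequality
    apply liminf_le_liminf
    filter_upwards with n
    show (((n : ℝ)⁻¹ : ℝ) : EReal) * E.plog _ ≤ (((n : ℝ)⁻¹ : ℝ) : EReal) * E.plog _
    apply mul_le_mul_of_nonneg_left _ (EReal.coe_nonneg.mpr (inv_nonneg.mpr (Nat.cast_nonneg n)))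
    exact ENNReal.log_monotone (measure_mono (fun ω hω => hω.1))
    all_goals isBoundedDefault
end
end

section
/- Let r ∈ ℕ, c ∈ ℝ, and let δ : ℕ × (0,∞) → ℝ be a function with δ(n,k) ≤ 0 for all n and k, satisfying: for all real numbers 0 < k < k' and all integers m ≥ 1 and n ≥ r·k'/(k'−k), one has δ(m+n, k) ≥ c + δ(m, k) + δ(n−r, k'). Then for all 0 < k < k': liminf_{n→∞} δ(n,k)/n ≥ limsup_{n→∞} δ(n,k')/n. In particular, setting δ̲(k) = liminf_{n→∞} δ(n,k)/n and δ̄(k) = limsup_{n→∞} δ(n,k)/n, one has δ̲(k') ≤ δ̄(k') ≤ δ̲(k) ≤ δ̄(k) whenever k < k', so both δ̲ and δ̄ are non-increasing. -/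
set_option maxHeartbeats 1000000

/-- deterministic generalized subadditive lemma: if
`δ : ℕ × (0,∞) → ℝ` is nonpositive and satisfies
`δ(m+n, k) ≥ c + δ(m, k) + δ(n−r, k')` for all `0 < k < k'`, `m ≥ 1` and
`n ≥ r k' / (k' − k)`, then for all `0 < k < k'` one has
`liminf δ(n,k')/n ≤ limsup δ(n,k')/n ≤ liminf δ(n,k)/n ≤ limsup δ(n,k)/n`. -/
theorem generalized_subadditive_lemma (r : ℕ) (c : ℝ) (δ : ℕ → ℝ → ℝ)
    (hneg : ∀ (n : ℕ) (k : ℝ), 0 < k → δ n k ≤ 0)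
    (hsub : ∀ k k' : ℝ, 0 < k → k < k' → ∀ m n : ℕ, 1 ≤ m →
      (r : ℝ) * k' / (k' - k) ≤ (n : ℝ) → c + δ m k + δ (n - r) k' ≤ δ (m + n) k) :
    ∀ k k' : ℝ, 0 < k → k < k' →
      Filter.liminf (fun n : ℕ => ((δ n k' / n : ℝ) : EReal)) Filter.atTop ≤
          Filter.limsup (fun n : ℕ => ((δ n k' / n : ℝ) : EReal)) Filter.atTop ∧
        Filter.limsup (fun n : ℕ => ((δ n k' / n : ℝ) : EReal)) Filter.atTop ≤
          Filter.liminf (fun n : ℕ => ((δ n k / n : ℝ) : EReal)) Filter.atTop ∧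
        Filter.liminf (fun n : ℕ => ((δ n k / n : ℝ) : EReal)) Filter.atTop ≤
          Filter.limsup (fun n : ℕ => ((δ n k / n : ℝ) : EReal)) Filter.atTop := by
  intro k k' hk hkk'
  have hk' : 0 < k' := hk.trans hkk'
  refine ⟨Filter.liminf_le_limsup, ?_, Filter.liminf_le_limsup⟩
  -- iteration lemma
  have hiter : ∀ n' : ℕ, (r : ℝ) * k' / (k' - k) ≤ (n' : ℝ) →
      ∀ t m : ℕ, 1 ≤ m →
      (t : ℝ) * (c + δ (n' - r) k') + δ m k ≤ δ (m + t * n') k := by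
    intro n' hn' t
    induction t with
    | zero => intro m hm; simp
    | succ t ih =>
      intro m hm
      have h1 := hsub k k' hk hkk' (m + t * n') n' (le_trans hm (Nat.le_add_right _ _)) hn'
      have h2 := ih m hm
      have he : m + (t + 1) * n' = (m + t * n') + n' := by ring
      rw [he]
      push_cast
      push_cast at h2
      linarith
  -- limsup of g is ≤ 0
  have hg0 : Filter.limsup (fun n : ℕ => ((δ n k' / n : ℝ) : EReal)) Filter.atTop ≤ (0 : EReal) := by
    apply Filter.limsup_le_of_le (by isBoundedDefault)
    filter_upwards with n
    have h : δ n k' / n ≤ 0 := div_nonpos_iff.mpr (Or.inr ⟨hneg n k' hk', n.cast_nonneg⟩)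
    exact_mod_cast EReal.coe_le_coe_iff.mpr h
  -- core step
  have core : ∀ x y : ℝ, y < x →
      (x : EReal) < Filter.limsup (fun n : ℕ => ((δ n k' / n : ℝ) : EReal)) Filter.atTop →
      (y : EReal) ≤ Filter.liminf (fun n : ℕ => ((δ n k / n : ℝ) : EReal)) Filter.atTop := by
    intro x y hyx hxg
    have hx0 : x < 0 := by
      have := lt_of_lt_of_le hxg hg0
      exact_mod_cast this
    have hfreq : ∃ᶠ n in Filter.atTop, (x : EReal) < ((δ n k' / n : ℝ) : EReal) :=
      Filter.frequently_lt_of_lt_limsup (by isBoundedDefault) hxg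
    set M : ℕ := max 1 (max ⌈(r : ℝ) * k' / (k' - k)⌉₊ ⌈2 * |c| / (x - y)⌉₊) with hM
    obtain ⟨n, hlt, hge⟩ := (hfreq.and_eventually (Filter.eventually_ge_atTop M)).exists
    have hn1 : 1 ≤ n := le_trans (le_max_left _ _) hge
    have hnpos : (0 : ℝ) < n := by exact_mod_cast hn1
    have hnx : x < δ n k' / n := by exact_mod_cast hlt
    have hnk : (r : ℝ) * k' / (k' - k) ≤ (n : ℝ) :=
      Nat.ceil_le.mp (le_trans (le_trans (le_max_left _ _) (le_max_right 1 _)) hge)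
    have hnc : 2 * |c| / (x - y) ≤ (n : ℝ) :=
      Nat.ceil_le.mp (le_trans (le_trans (le_max_right _ _) (le_max_right 1 _)) hge)
    have hc : |c| ≤ (x - y) / 2 * n := by
      rw [div_le_iff₀ (by linarith : (0:ℝ) < x - y)] at hnc
      nlinarith
    set n' : ℕ := n + r with hn'def
    have hn'pos : (0 : ℝ) < n' := by positivity
    have hn'k : (r : ℝ) * k' / (k' - k) ≤ (n' : ℝ) := by
      refine le_trans hnk ?_
      exact_mod_cast Nat.le_add_right n r
    have hnr : n' - r = n := by omega
    set a : ℝ := c + δ n k' with hadef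
    set y' : ℝ := (x + y) / 2 with hy'def
    have hdnk : δ n k' ≤ 0 := hneg n k' hk'
    have hxn : x * n < δ n k' := (lt_div_iff₀ hnpos).mp hnx
    have hrn : (0:ℝ) ≤ r := r.cast_nonneg
    have hn'cast : (n' : ℝ) = (n : ℝ) + r := by push_cast [hn'def]; ring
    have ha : y' * n' ≤ a := by
      rw [hn'cast, hadef, hy'def]
      have := neg_abs_le c
      nlinarith
    -- min over the residues
    have hIcc : (Finset.Icc 1 n').Nonempty := by
      refine ⟨1, Finset.mem_Icc.mpr ⟨le_refl 1, ?_⟩⟩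
      omega
    set B : ℝ := (Finset.Icc 1 n').inf' hIcc (fun m => δ m k) with hBdef
    have hB : ∀ m : ℕ, 1 ≤ m → m ≤ n' → B ≤ δ m k := by
      intro m h1 h2
      exact Finset.inf'_le _ (Finset.mem_Icc.mpr ⟨h1, h2⟩)
    -- eventual bound
    refine Filter.le_liminf_of_le (by isBoundedDefault) ?_
    have hy'y : (0:ℝ) < y' - y := by rw [hy'def]; linarith
    filter_upwards [Filter.eventually_ge_atTop (max (max 1 n') ⌈(|a| - B) / (y' - y)⌉₊)]
      with N hN
    have hN1 : 1 ≤ N := le_trans (le_trans (le_max_left 1 n') (le_max_left _ _)) hN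
    have hNn' : n' ≤ N := le_trans (le_trans (le_max_right 1 n') (le_max_left _ _)) hN
    have hNceil : (|a| - B) / (y' - y) ≤ (N : ℝ) :=
      Nat.ceil_le.mp (le_trans (le_max_right _ _) hN)
    have hNbig : |a| - B ≤ (y' - y) * N := by
      rw [div_le_iff₀ hy'y] at hNceil; linarith
    set t : ℕ := (N - 1) / n' with htdef
    set s : ℕ := (N - 1) % n' with hsdef
    have hn'0 : 0 < n' := by omega
    have hdm : n' * t + s = N - 1 := Nat.div_add_mod (N - 1) n'
    have hdm' : t * n' + s = N - 1 := by rw [Nat.mul_comm] at hdm; exact hdm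
    have hslt : s < n' := Nat.mod_lt _ hn'0
    have hdecomp : (s + 1) + t * n' = N := by omega
    have hδ : (t : ℝ) * a + δ (s + 1) k ≤ δ N k := by
      have := hiter n' hn'k t (s + 1) (by omega)
      rw [hnr, hdecomp] at this
      exact this
    have hBm : B ≤ δ (s + 1) k := hB (s + 1) (by omega) (by omega)
    have hNpos : (0 : ℝ) < N := by exact_mod_cast hN1
    -- real arithmetic: y * N ≤ δ N k
    have hdmR : (n' : ℝ) * t + s = (N : ℝ) - 1 := by
      have h0 : n' * t + s + 1 = N := by omega
      have h' : ((n' * t + s + 1 : ℕ) : ℝ) = (N : ℝ) := by exact_mod_cast h0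
      push_cast at h'
      linarith
    have hsR : (s : ℝ) ≤ (n' : ℝ) - 1 := by
      have : (s : ℝ) + 1 ≤ (n' : ℝ) := by exact_mod_cast hslt
      linarith
    have hs0 : (0 : ℝ) ≤ s := s.cast_nonneg
    have htR0 : (0 : ℝ) ≤ t := t.cast_nonneg
    have hNn'R : (n' : ℝ) ≤ N := by exact_mod_cast hNn'
    have key : y * N ≤ δ N k := by
      set P : ℝ := (n' : ℝ) * t with hPdef
      have hP1 : (N : ℝ) - n' ≤ P := by rw [hPdef]; linarith
      have hP2 : P ≤ (N : ℝ) := by rw [hPdef]; linarith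
      have hNn'0 : (0 : ℝ) ≤ (N : ℝ) - n' := by linarith
      have hTa : (y' * N - |a|) * n' ≤ ((t : ℝ) * a) * n' := by
        have hPe : ((t : ℝ) * a) * n' = P * a := by rw [hPdef]; ring
        rw [hPe]
        rcases le_or_gt 0 a with hA | hA
        · have h2 : ((N : ℝ) - n') * a ≤ P * a := mul_le_mul_of_nonneg_right hP1 hA
          have h3 : ((N : ℝ) - n') * (y' * n') ≤ ((N : ℝ) - n') * a :=
            mul_le_mul_of_nonneg_left ha hNn'0
          have haabs : a ≤ |a| := le_abs_self a
          have hy'n : y' * n' ≤ |a| := le_trans ha haabs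
          nlinarith
        · have h2 : P * a ≥ (N : ℝ) * a := mul_le_mul_of_nonpos_right hP2 (le_of_lt hA)
          have h3 : (N : ℝ) * (y' * n') ≤ (N : ℝ) * a :=
            mul_le_mul_of_nonneg_left ha (le_of_lt hNpos)
          have h4 : (0 : ℝ) ≤ |a| := abs_nonneg a
          nlinarith
      have hTa' : y' * N - |a| ≤ (t : ℝ) * a := (mul_le_mul_iff_of_pos_right hn'pos).mp hTa
      linarith [hδ, hBm, hNbig]
    have : y ≤ δ N k / N := (le_div_iff₀ hNpos).mpr key
    exact_mod_cast EReal.coe_le_coe_iff.mpr this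
  -- conclude from core via density
  by_contra h
  push_neg at h
  obtain ⟨x, hx1, hx2⟩ := EReal.exists_between_coe_real h
  have : (x : EReal) ≤ Filter.liminf (fun n : ℕ => ((δ n k / n : ℝ) : EReal)) Filter.atTop := by
    by_contra h2
    push_neg at h2
    obtain ⟨y, hy1, hy2⟩ := EReal.exists_between_coe_real h2
    have hyx : y < x := by exact_mod_cast hy2
    exact absurd (core x y hyx hx2) (not_le.mpr hy1)
  exact absurd this (not_le.mpr hx1)
end

section
/- Let Λ(λ) = lim_{n→∞} (1/n) log 𝔼[e^{λ·X_n}] (which exists for every λ ∈ ℝ^d) and let Λ*(x) = sup_{λ∈ℝ^d} (λ·x − Λ(λ)) be its convex conjugate. A point y ∈ ℝ^d is an exposed point of Λ* if there is λ ∈ ℝ^d (an exposing hyperplane) such that λ·y − Λ*(y) > λ·x − Λ*(x) for all x ≠ y. Let 𝓕 be the set of exposed points of Λ* whose exposing hyperplane belongs to the interior of {λ ∈ ℝ^d : Λ(λ) < +∞}. Then for every open set G ⊆ ℝ^d: liminf_{n→∞} (1/n) log ℙ(X_n/n ∈ G) ≥ −inf_{x ∈ G ∩ 𝓕} Λ*(x).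 -/
open MeasureTheory ProbabilityTheory Filter
open scoped ENNReal

noncomputable section

open DWRE

variable {d : ℕ} {Ω : Type} [MeasurableSpace Ω]

namespace LDAux

variable {d : ℕ} {Ω : Type} [MeasurableSpace Ω]

lemma emb_add (d : ℕ) (a b : Fin d → ℤ) : emb d (a + b) = emb d a + emb d b := by
  ext i
  simp [emb]

lemma emb_zero (d : ℕ) : emb d 0 = 0 := by
  ext i
  simp [emb]

lemma meas_walk (E : DWRE d Ω) : ∀ n, Measurable (E.walk n)
  | 0 => measurable_const
  | (n+1) => by
    have h := meas_walk E n
    have h2 : Measurable (fun ω => E.η (E.walk n ω) ω) := by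
      intro A hA
      have hset : (fun ω => E.η (E.walk n ω) ω) ⁻¹' A
          = ⋃ z : Fin d → ℤ, ((E.walk n) ⁻¹' {z} ∩ (E.η z) ⁻¹' A) := by
        ext ω
        simp only [Set.mem_preimage, Set.mem_iUnion, Set.mem_inter_iff, Set.mem_singleton_iff]
        constructor
        · intro hω; exact ⟨E.walk n ω, rfl, hω⟩
        · rintro ⟨z, hz, hω⟩; rw [hz]; exact hω
      rw [hset]
      exact MeasurableSet.iUnion fun z => (h (measurableSet_singleton z)).inter (E.meas_η z hA)
    have : E.walk (n+1) = fun ω => E.walk n ω + E.η (E.walk n ω) ω := rfl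
    rw [this]
    exact (Measurable.of_discrete (f := fun p : (Fin d → ℤ) × (Fin d → ℤ) => p.1 + p.2)).comp
      (h.prodMk h2)

lemma meas_embwalk (E : DWRE d Ω) (n : ℕ) : Measurable (fun ω => emb d (E.walk n ω)) :=
  (Measurable.of_discrete (f := emb d)).comp (meas_walk E n)

lemma walk_bound (E : DWRE d Ω) : ∀ᵐ ω ∂E.P, ∀ n : ℕ, ‖emb d (E.walk n ω)‖ ≤ n * E.L := by
  have h : ∀ᵐ ω ∂E.P, ∀ z, ‖emb d (E.η z ω)‖ ≤ E.L := (ae_all_iff).mpr E.bounded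
  filter_upwards [h] with ω hω
  intro n
  induction n with
  | zero => simp [DWRE.walk, emb_zero]
  | succ n ih =>
    have hw : E.walk (n+1) ω = E.walk n ω + E.η (E.walk n ω) ω := rfl
    rw [hw, emb_add]
    calc ‖emb d (E.walk n ω) + emb d (E.η (E.walk n ω) ω)‖
        ≤ ‖emb d (E.walk n ω)‖ + ‖emb d (E.η (E.walk n ω) ω)‖ := norm_add_le _ _
      _ ≤ n * E.L + E.L := add_le_add ih (hω _)
      _ = (n + 1 : ℕ) * E.L := by push_cast; ring

/-- The partition function `ψ_θ(n) = E[exp⟨θ, X_n⟩]`. -/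
def psi (E : DWRE d Ω) (θ : EuclideanSpace ℝ (Fin d)) (n : ℕ) : ℝ :=
  ∫ ω, Real.exp ((inner ℝ θ (emb d (E.walk n ω)) : ℝ)) ∂E.P

lemma meas_exp_inner (E : DWRE d Ω) (θ : EuclideanSpace ℝ (Fin d)) (n : ℕ) :
    Measurable (fun ω => Real.exp ((inner ℝ θ (emb d (E.walk n ω)) : ℝ))) :=
  Real.measurable_exp.comp (measurable_const.inner (meas_embwalk E n))

lemma abs_inner_le (E : DWRE d Ω) (θ x : EuclideanSpace ℝ (Fin d)) {n : ℕ} (hx : ‖x‖ ≤ n * E.L) :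
    |(inner ℝ θ x : ℝ)| ≤ ‖θ‖ * (n * E.L) :=
  (abs_real_inner_le_norm θ x).trans (by
    have := norm_nonneg θ
    nlinarith [norm_nonneg x])

lemma integrable_exp (E : DWRE d Ω) (θ : EuclideanSpace ℝ (Fin d)) (n : ℕ) :
    Integrable (fun ω => Real.exp ((inner ℝ θ (emb d (E.walk n ω)) : ℝ))) E.P := by
  apply Integrable.mono' (integrable_const (Real.exp (‖θ‖ * (n * E.L))))
    (meas_exp_inner E θ n).aestronglyMeasurable
  filter_upwards [walk_bound E] with ω hω
  rw [Real.norm_eq_abs, Real.abs_exp]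
  exact Real.exp_le_exp.mpr (le_trans (le_abs_self _) (abs_inner_le E θ _ (hω n)))

lemma psi_le (E : DWRE d Ω) (θ : EuclideanSpace ℝ (Fin d)) (n : ℕ) :
    psi E θ n ≤ Real.exp (‖θ‖ * (n * E.L)) := by
  have h := integral_mono_ae (integrable_exp E θ n)
    (integrable_const (Real.exp (‖θ‖ * (n * E.L)))) ?_
  · simpa [psi] using h
  · filter_upwards [walk_bound E] with ω hω
    exact Real.exp_le_exp.mpr (le_trans (le_abs_self _) (abs_inner_le E θ _ (hω n)))

lemma psi_ge (E : DWRE d Ω) (θ : EuclideanSpace ℝ (Fin d)) (n : ℕ) :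
    Real.exp (-(‖θ‖ * (n * E.L))) ≤ psi E θ n := by
  have h := integral_mono_ae (integrable_const (Real.exp (-(‖θ‖ * (n * E.L)))))
    (integrable_exp E θ n) ?_
  · simpa [psi] using h
  · filter_upwards [walk_bound E] with ω hω
    refine Real.exp_le_exp.mpr ?_
    have := abs_inner_le E θ _ (hω n)
    linarith [neg_abs_le (inner ℝ θ (emb d (E.walk n ω)) : ℝ)]

lemma psi_pos (E : DWRE d Ω) (θ : EuclideanSpace ℝ (Fin d)) (n : ℕ) : 0 < psi E θ n :=
  lt_of_lt_of_le (Real.exp_pos _) (psi_ge E θ n)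

/-- `(1/n) log ψ_θ(n)`, real-valued. -/
def rr (E : DWRE d Ω) (θ : EuclideanSpace ℝ (Fin d)) (n : ℕ) : ℝ :=
  (n : ℝ)⁻¹ * Real.log (psi E θ n)

lemma mgfRate_eq (E : DWRE d Ω) (θ : EuclideanSpace ℝ (Fin d)) (n : ℕ) :
    E.mgfRate θ n = ((rr E θ n : ℝ) : EReal) := rfl

lemma abs_rr_le (E : DWRE d Ω) (θ : EuclideanSpace ℝ (Fin d)) {n : ℕ} (hn : 1 ≤ n) :
    |rr E θ n| ≤ ‖θ‖ * E.L := by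
  have hn0 : (0:ℝ) < n := by exact_mod_cast hn
  have h1 : Real.log (psi E θ n) ≤ ‖θ‖ * (n * E.L) := by
    calc Real.log (psi E θ n) ≤ Real.log (Real.exp (‖θ‖ * (n * E.L))) :=
          Real.log_le_log (psi_pos E θ n) (psi_le E θ n)
      _ = ‖θ‖ * (n * E.L) := Real.log_exp _
  have h2 : -(‖θ‖ * (n * E.L)) ≤ Real.log (psi E θ n) := by
    calc -(‖θ‖ * (n * E.L)) = Real.log (Real.exp (-(‖θ‖ * (n * E.L)))) := (Real.log_exp _).symm
      _ ≤ Real.log (psi E θ n) := Real.log_le_log (Real.exp_pos _) (psi_ge E θ n)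
  rw [rr, abs_mul, abs_of_nonneg (inv_nonneg.mpr hn0.le)]
  have h3 : |Real.log (psi E θ n)| ≤ (n:ℝ) * (‖θ‖ * E.L) := by
    rw [abs_le]; constructor <;> nlinarith
  calc (n:ℝ)⁻¹ * |Real.log (psi E θ n)| ≤ (n:ℝ)⁻¹ * ((n:ℝ) * (‖θ‖ * E.L)) :=
        mul_le_mul_of_nonneg_left h3 (inv_nonneg.mpr hn0.le)
    _ = ‖θ‖ * E.L := by field_simp

lemma lam_zero (E : DWRE d Ω) (Λ : EuclideanSpace ℝ (Fin d) → EReal)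
    (hΛ : ∀ lam, Filter.Tendsto (E.mgfRate lam) Filter.atTop (nhds (Λ lam))) : Λ 0 = 0 := by
  have h0 : ∀ n : ℕ, E.mgfRate 0 n = (0 : EReal) := by
    intro n
    have hpsi : psi E 0 n = 1 := by
      simp [psi]
    rw [mgfRate_eq, rr, hpsi]
    simp
  have h1 : Filter.Tendsto (E.mgfRate 0) Filter.atTop (nhds (0 : EReal)) := by
    rw [funext h0]; exact tendsto_const_nhds
  exact (tendsto_nhds_unique (hΛ 0) h1)

lemma lam_real (E : DWRE d Ω) (Λ : EuclideanSpace ℝ (Fin d) → EReal)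
    (hΛ : ∀ lam, Filter.Tendsto (E.mgfRate lam) Filter.atTop (nhds (Λ lam)))
    (θ : EuclideanSpace ℝ (Fin d)) :
    Λ θ = ((Λ θ).toReal : EReal) ∧
      Filter.Tendsto (rr E θ) Filter.atTop (nhds ((Λ θ).toReal)) := by
  have hev : ∀ᶠ n in Filter.atTop, E.mgfRate θ n ∈
      Set.Icc ((-(‖θ‖ * E.L) : ℝ) : EReal) ((‖θ‖ * E.L : ℝ) : EReal) := by
    filter_upwards [Filter.eventually_ge_atTop 1] with n hn
    have := abs_rr_le E θ hn
    rw [abs_le] at this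
    rw [mgfRate_eq]
    exact ⟨EReal.coe_le_coe_iff.mpr (by linarith [this.1]), EReal.coe_le_coe_iff.mpr this.2⟩
  have hle : Λ θ ≤ ((‖θ‖ * E.L : ℝ) : EReal) :=
    le_of_tendsto (hΛ θ) (hev.mono fun n hn => hn.2)
  have hge : ((-(‖θ‖ * E.L) : ℝ) : EReal) ≤ Λ θ :=
    ge_of_tendsto (hΛ θ) (hev.mono fun n hn => hn.1)
  have hnt : Λ θ ≠ ⊤ := fun h => by
    rw [h] at hle; exact absurd hle (not_le.mpr (EReal.coe_lt_top _))
  have hnb : Λ θ ≠ ⊥ := fun h => by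
    rw [h] at hge; exact absurd hge (not_le.mpr (EReal.bot_lt_coe _))
  refine ⟨(EReal.coe_toReal hnt hnb).symm, ?_⟩
  have := hΛ θ
  rw [← EReal.coe_toReal hnt hnb] at this
  rw [← EReal.tendsto_coe]
  exact this

lemma setIntegral_union_le (E : DWRE d Ω) {f : Ω → ℝ} (hf : Integrable f E.P)
    (hf0 : 0 ≤ᶠ[ae E.P] f) {s u : Set Ω} (hs : MeasurableSet s) (hu : MeasurableSet u) :
    ∫ ω in s ∪ u, f ω ∂E.P ≤ ∫ ω in s, f ω ∂E.P + ∫ ω in u, f ω ∂E.P := by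
  have h1 : s ∪ u = s ∪ (u \ s) := (Set.union_diff_self).symm
  rw [h1, setIntegral_union disjoint_sdiff_self_right (hu.diff hs) hf.integrableOn
    hf.integrableOn]
  refine add_le_add le_rfl ?_
  exact setIntegral_mono_set hf.integrableOn (ae_restrict_of_ae hf0)
    (HasSubset.Subset.eventuallyLE Set.diff_subset)

lemma setIntegral_biUnion_le (E : DWRE d Ω) {f : Ω → ℝ} (hf : Integrable f E.P)
    (hf0 : 0 ≤ᶠ[ae E.P] f) {ι : Type} (t : Finset ι) (s : ι → Set Ω)
    (hs : ∀ i, MeasurableSet (s i)) :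
    ∫ ω in ⋃ j ∈ t, s j, f ω ∂E.P ≤ ∑ j ∈ t, ∫ ω in s j, f ω ∂E.P := by
  classical
  induction t using Finset.induction_on with
  | empty => simp
  | insert a t ha ih =>
    rw [Finset.set_biUnion_insert, Finset.sum_insert ha]
    calc ∫ ω in s a ∪ ⋃ j ∈ t, s j, f ω ∂E.P
        ≤ ∫ ω in s a, f ω ∂E.P + ∫ ω in ⋃ j ∈ t, s j, f ω ∂E.P :=
          setIntegral_union_le E hf hf0 (hs a)
            (MeasurableSet.biUnion t.countable_toSet fun i _ => hs i)
      _ ≤ _ := add_le_add le_rfl ih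

/-- The event that the rescaled walk at time `n` lies in `B`. -/
def Ev (E : DWRE d Ω) (B : Set (EuclideanSpace ℝ (Fin d))) (n : ℕ) : Set Ω :=
  {ω | (n : ℝ)⁻¹ • emb d (E.walk n ω) ∈ B}

lemma Ev_meas (E : DWRE d Ω) {B : Set (EuclideanSpace ℝ (Fin d))} (hB : MeasurableSet B)
    (n : ℕ) : MeasurableSet (Ev E B n) := by
  have h : Measurable (fun ω => (n : ℝ)⁻¹ • emb d (E.walk n ω)) :=
    (meas_embwalk E n).const_smul ((n : ℝ)⁻¹)
  exact h hB

lemma key_liminf (E : DWRE d Ω) (Λ : EuclideanSpace ℝ (Fin d) → EReal)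
    (hΛ : ∀ lam : EuclideanSpace ℝ (Fin d),
      Filter.Tendsto (E.mgfRate lam) Filter.atTop (nhds (Λ lam)))
    (G : Set (EuclideanSpace ℝ (Fin d))) (y lam : EuclideanSpace ℝ (Fin d))
    (hstep : ∀ x : EuclideanSpace ℝ (Fin d), x ≠ y → ∃ μ : EuclideanSpace ℝ (Fin d),
      (inner ℝ lam x : ℝ) - (Λ lam).toReal < (inner ℝ μ x : ℝ) - (Λ μ).toReal)
    (δ : ℝ) (hδ : 0 < δ) (hball : Metric.ball y δ ⊆ G) :
    (((Λ lam).toReal - (inner ℝ lam y : ℝ) - δ * ‖lam‖ : ℝ) : EReal) ≤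
      Filter.liminf (E.rate fun n => {ω | (n : ℝ)⁻¹ • emb d (E.walk n ω) ∈ G})
        Filter.atTop := by
  classical
  have htend : ∀ θ, Filter.Tendsto (rr E θ) Filter.atTop (nhds ((Λ θ).toReal)) :=
    fun θ => (lam_real E Λ hΛ θ).2
  set Λr : EuclideanSpace ℝ (Fin d) → ℝ := fun θ => (Λ θ).toReal with hΛr
  -- the compact set K
  set K : Set (EuclideanSpace ℝ (Fin d)) := Metric.closedBall 0 E.L \ Metric.ball y δ with hK
  have hKcomp : IsCompact K := by
    rw [hK, Set.diff_eq]
    exact (isCompact_closedBall 0 E.L).inter_right Metric.isOpen_ball.isClosed_compl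
  have hxny : ∀ x : K, (x : EuclideanSpace ℝ (Fin d)) ≠ y := by
    rintro ⟨x, hx⟩ h
    have h' : x = y := h
    exact hx.2 (h' ▸ Metric.mem_ball_self hδ)
  choose μf hμf using fun x : K => hstep x (hxny x)
  set θf : K → EuclideanSpace ℝ (Fin d) := fun x => μf x - lam with hθf
  set bf : K → ℝ := fun x =>
    ((inner ℝ (μf x) (x : EuclideanSpace ℝ (Fin d)) : ℝ) - Λr (μf x)) -
      ((inner ℝ lam (x : EuclideanSpace ℝ (Fin d)) : ℝ) - Λr lam) with hbf
  have hbf_pos : ∀ x : K, 0 < bf x := fun x => sub_pos.mpr (hμf x)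
  set ρf : K → ℝ := fun x => bf x / (2 * (‖θf x‖ + 1)) with hρf
  have hρf_pos : ∀ x : K, 0 < ρf x := fun x => div_pos (hbf_pos x) (by positivity)
  obtain ⟨t, ht⟩ := hKcomp.elim_finite_subcover
    (fun x : K => Metric.ball (x : EuclideanSpace ℝ (Fin d)) (ρf x))
    (fun _ => Metric.isOpen_ball)
    (fun z hz => Set.mem_iUnion.mpr ⟨⟨z, hz⟩, Metric.mem_ball_self (hρf_pos _)⟩)
  set cf : K → ℝ := fun x =>
    (inner ℝ (θf x) (x : EuclideanSpace ℝ (Fin d)) : ℝ) - ρf x * ‖θf x‖ with hcf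
  have hρθ : ∀ x : K, ρf x * ‖θf x‖ ≤ bf x / 2 := by
    intro x
    have hb := hbf_pos x
    have hn := norm_nonneg (θf x)
    rw [hρf]
    rw [div_mul_eq_mul_div, div_le_div_iff₀ (by positivity) (by norm_num : (0:ℝ) < 2)]
    nlinarith
  have hcf_ge : ∀ x : K, bf x / 2 ≤ cf x - (Λr (μf x) - Λr lam) := by
    intro x
    have h1 := hρθ x
    have h4 : (inner ℝ (θf x) (x : EuclideanSpace ℝ (Fin d)) : ℝ)
        = (inner ℝ (μf x) (x : EuclideanSpace ℝ (Fin d)) : ℝ)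
          - (inner ℝ lam (x : EuclideanSpace ℝ (Fin d)) : ℝ) := by
      rw [hθf]; exact inner_sub_left _ _ _
    have h5 : bf x = (inner ℝ (μf x) (x : EuclideanSpace ℝ (Fin d)) : ℝ) - Λr (μf x)
        - ((inner ℝ lam (x : EuclideanSpace ℝ (Fin d)) : ℝ) - Λr lam) := rfl
    have h6 : cf x = (inner ℝ (θf x) (x : EuclideanSpace ℝ (Fin d)) : ℝ) - ρf x * ‖θf x‖ := rfl
    linarith
  -- the integrand
  set f : ℕ → Ω → ℝ := fun n ω => Real.exp ((inner ℝ lam (emb d (E.walk n ω)) : ℝ)) with hf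
  -- bound on each covering ball
  have hWj : ∀ j : K, j ∈ t → ∀ n : ℕ, 1 ≤ n →
      ∫ ω in Ev E (Metric.ball (j : EuclideanSpace ℝ (Fin d)) (ρf j)) n, f n ω ∂E.P ≤
        Real.exp (-((n : ℝ) * cf j)) * psi E (μf j) n := by
    intro j _ n hn
    have hn0 : (0:ℝ) < n := by exact_mod_cast hn
    have hpt : ∀ ω ∈ Ev E (Metric.ball (j : EuclideanSpace ℝ (Fin d)) (ρf j)) n,
        f n ω ≤ Real.exp (-((n:ℝ) * cf j)) *
          Real.exp ((inner ℝ (μf j) (emb d (E.walk n ω)) : ℝ)) := by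
      intro ω hω
      have hfω : f n ω = Real.exp ((inner ℝ lam (emb d (E.walk n ω)) : ℝ)) := rfl
      rw [hfω, ← Real.exp_add]
      apply Real.exp_le_exp.mpr
      have hθX : (n:ℝ) * cf j ≤ (inner ℝ (θf j) (emb d (E.walk n ω)) : ℝ) := by
        have hvball : (n:ℝ)⁻¹ • emb d (E.walk n ω) ∈
            Metric.ball (j : EuclideanSpace ℝ (Fin d)) (ρf j) := hω
        set v := (n:ℝ)⁻¹ • emb d (E.walk n ω) with hv
        have hinner : (inner ℝ (θf j) (emb d (E.walk n ω)) : ℝ) = (n:ℝ) * (inner ℝ (θf j) v : ℝ) := by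
          rw [hv, real_inner_smul_right]
          field_simp
        rw [hinner]
        refine mul_le_mul_of_nonneg_left ?_ hn0.le
        have h1 : (inner ℝ (θf j) v : ℝ) = (inner ℝ (θf j) (j : EuclideanSpace ℝ (Fin d)) : ℝ)
            + (inner ℝ (θf j) (v - (j : EuclideanSpace ℝ (Fin d))) : ℝ) := by
          rw [← inner_add_right]
          congr 1
          abel
        have h2 : |(inner ℝ (θf j) (v - (j : EuclideanSpace ℝ (Fin d))) : ℝ)| ≤ ‖θf j‖ * ρf j := by
          refine (abs_real_inner_le_norm _ _).trans ?_
          have h3 : ‖v - (j : EuclideanSpace ℝ (Fin d))‖ ≤ ρf j := by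
            rw [← dist_eq_norm]
            exact (Metric.mem_ball.mp hvball).le
          exact mul_le_mul_of_nonneg_left h3 (norm_nonneg _)
        have h6 : cf j = (inner ℝ (θf j) (j : EuclideanSpace ℝ (Fin d)) : ℝ)
            - ρf j * ‖θf j‖ := rfl
        have h7 := neg_abs_le ((inner ℝ (θf j) (v - (j : EuclideanSpace ℝ (Fin d))) : ℝ))
        have h8 : ρf j * ‖θf j‖ = ‖θf j‖ * ρf j := mul_comm _ _
        linarith
      have hsub : (inner ℝ (θf j) (emb d (E.walk n ω)) : ℝ)
          = (inner ℝ (μf j) (emb d (E.walk n ω)) : ℝ)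
            - (inner ℝ lam (emb d (E.walk n ω)) : ℝ) := by
        rw [hθf]; exact inner_sub_left _ _ _
      linarith
    calc ∫ ω in Ev E (Metric.ball (j : EuclideanSpace ℝ (Fin d)) (ρf j)) n, f n ω ∂E.P
        ≤ ∫ ω in Ev E (Metric.ball (j : EuclideanSpace ℝ (Fin d)) (ρf j)) n,
            Real.exp (-((n:ℝ) * cf j)) *
              Real.exp ((inner ℝ (μf j) (emb d (E.walk n ω)) : ℝ)) ∂E.P :=
          setIntegral_mono_on (integrable_exp E lam n).integrableOn
            ((integrable_exp E (μf j) n).const_mul _).integrableOn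
            (Ev_meas E measurableSet_ball n) hpt
      _ = Real.exp (-((n:ℝ) * cf j)) *
            ∫ ω in Ev E (Metric.ball (j : EuclideanSpace ℝ (Fin d)) (ρf j)) n,
              Real.exp ((inner ℝ (μf j) (emb d (E.walk n ω)) : ℝ)) ∂E.P := by
          exact MeasureTheory.integral_const_mul _ _
      _ ≤ Real.exp (-((n:ℝ) * cf j)) * psi E (μf j) n := by
          refine mul_le_mul_of_nonneg_left ?_ (Real.exp_pos _).le
          exact setIntegral_le_integral (integrable_exp E (μf j) n)
            (Filter.Eventually.of_forall fun ω => (Real.exp_pos _).le)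
  -- the tilted ratios
  set q : K → ℕ → ℝ := fun j n => Real.exp (-((n : ℝ) * cf j)) * psi E (μf j) n / psi E lam n
    with hq
  have hq_to : ∀ j : K, Filter.Tendsto (q j) Filter.atTop (nhds 0) := by
    intro j
    set g : ℝ := cf j - (Λr (μf j) - Λr lam) with hg
    have hg_pos : 0 < g := lt_of_lt_of_le (div_pos (hbf_pos j) two_pos) (hcf_ge j)
    have hEq : ∀ n : ℕ, 1 ≤ n →
        q j n = Real.exp ((n:ℝ) * (-cf j + rr E (μf j) n - rr E lam n)) := by
      intro n hn
      have hn0 : ((n:ℝ)) ≠ 0 := by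
        have h : (0:ℝ) < n := by exact_mod_cast hn
        exact h.ne'
      have hpsim : psi E (μf j) n = Real.exp ((n:ℝ) * rr E (μf j) n) := by
        rw [rr, ← mul_assoc, mul_inv_cancel₀ hn0, one_mul, Real.exp_log (psi_pos E (μf j) n)]
      have hpsil : psi E lam n = Real.exp ((n:ℝ) * rr E lam n) := by
        rw [rr, ← mul_assoc, mul_inv_cancel₀ hn0, one_mul, Real.exp_log (psi_pos E lam n)]
      have hqn : q j n = Real.exp (-((n:ℝ) * cf j)) * psi E (μf j) n / psi E lam n := rfl
      rw [hqn, hpsim, hpsil, ← Real.exp_add, ← Real.exp_sub]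
      congr 1
      ring
    have h1 : Filter.Tendsto (fun n => -cf j + rr E (μf j) n - rr E lam n)
        Filter.atTop (nhds (-g)) := by
      have h2 := ((tendsto_const_nhds (x := -cf j)).add (htend (μf j))).sub (htend lam)
      have h3 : -cf j + (Λ (μf j)).toReal - (Λ lam).toReal = -g := by rw [hg]; ring
      rw [h3] at h2
      exact h2
    have hev : ∀ᶠ n : ℕ in Filter.atTop, q j n ≤ Real.exp ((n:ℝ) * (-(g/2))) := by
      have h3 := h1.eventually_lt_const (show -g < -(g/2) by linarith)
      filter_upwards [h3, Filter.eventually_ge_atTop 1] with n hn3 hn1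
      rw [hEq n hn1]
      exact Real.exp_le_exp.mpr (mul_le_mul_of_nonneg_left hn3.le (Nat.cast_nonneg n))
    have hexp0 : Filter.Tendsto (fun n : ℕ => Real.exp ((n:ℝ) * (-(g/2))))
        Filter.atTop (nhds 0) :=
      Real.tendsto_exp_atBot.comp
        ((tendsto_natCast_atTop_atTop (R := ℝ)).atTop_mul_const_of_neg (by linarith))
    have hq_nonneg : ∀ n, 0 ≤ q j n := by
      intro n
      have hqn : q j n = Real.exp (-((n:ℝ) * cf j)) * psi E (μf j) n / psi E lam n := rfl
      rw [hqn]
      exact div_nonneg (mul_nonneg (Real.exp_pos _).le (psi_pos E (μf j) n).le)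
        (psi_pos E lam n).le
    exact tendsto_of_tendsto_of_tendsto_of_le_of_le' tendsto_const_nhds hexp0
      (Filter.Eventually.of_forall hq_nonneg) hev
  have hsum_to : Filter.Tendsto (fun n => ∑ j ∈ t, q j n) Filter.atTop (nhds 0) := by
    have h := tendsto_finset_sum t (fun j _ => hq_to j)
    simpa using h
  have hhalf : ∀ᶠ n in Filter.atTop, ∑ j ∈ t, q j n < 1 / 2 :=
    hsum_to.eventually_lt_const (by norm_num)
  -- the a.s. support set
  set Ω₀ : ℕ → Set Ω := fun n => {ω | ‖emb d (E.walk n ω)‖ ≤ n * E.L} with hΩ₀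
  have hΩ₀meas : ∀ n, MeasurableSet (Ω₀ n) :=
    fun n => measurableSet_le (meas_embwalk E n).norm measurable_const
  have hΩ₀null : ∀ n, E.P (Ω₀ n)ᶜ = 0 := by
    intro n
    have h : ∀ᵐ ω ∂E.P, ω ∈ Ω₀ n := (walk_bound E).mono fun ω h => h n
    simpa [ae_iff, hΩ₀, Set.compl_def] using h
  have hΩ₀ae : ∀ n, ((Ev E (Metric.ball y δ) n)ᶜ : Set Ω) =ᶠ[ae E.P]
      (((Ev E (Metric.ball y δ) n)ᶜ ∩ Ω₀ n : Set Ω)) := by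
    intro n
    rw [MeasureTheory.ae_eq_set]
    constructor
    · refine measure_mono_null ?_ (hΩ₀null n)
      intro ω hω
      simp only [Set.mem_diff, Set.mem_inter_iff, Set.mem_compl_iff, not_and] at hω ⊢
      exact hω.2 hω.1
    · have he : ((Ev E (Metric.ball y δ) n)ᶜ ∩ Ω₀ n) \ (Ev E (Metric.ball y δ) n)ᶜ = ∅ :=
        Set.diff_eq_empty.mpr Set.inter_subset_left
      rw [he]
      exact measure_empty
  -- main eventual bound on probabilities
  set a : ℝ := (inner ℝ lam y : ℝ) + δ * ‖lam‖ with ha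
  have hmain : ∀ᶠ n : ℕ in Filter.atTop,
      Real.exp (-((n : ℝ) * a)) * (psi E lam n / 2) ≤ (E.P (Ev E G n)).toReal := by
    filter_upwards [hhalf, Filter.eventually_ge_atTop 1] with n hn2 hn1
    have hn0 : (0:ℝ) < n := by exact_mod_cast hn1
    have hint := integrable_exp E lam n
    have hfnn : 0 ≤ᶠ[ae E.P] f n := Filter.Eventually.of_forall fun ω => (Real.exp_pos _).le
    have hdec : ∫ ω in Ev E (Metric.ball y δ) n, f n ω ∂E.P
        + ∫ ω in (Ev E (Metric.ball y δ) n)ᶜ, f n ω ∂E.P = psi E lam n :=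
      integral_add_compl (Ev_meas E measurableSet_ball n) hint
    have hcompl : ∫ ω in (Ev E (Metric.ball y δ) n)ᶜ, f n ω ∂E.P ≤ psi E lam n / 2 := by
      rw [setIntegral_congr_set (hΩ₀ae n)]
      have hsub : ((Ev E (Metric.ball y δ) n)ᶜ ∩ Ω₀ n : Set Ω) ⊆
          ⋃ j ∈ t, Ev E (Metric.ball (j : EuclideanSpace ℝ (Fin d)) (ρf j)) n := by
        intro ω hω
        have hvK : (n:ℝ)⁻¹ • emb d (E.walk n ω) ∈ K := by
          constructor
          · rw [Metric.mem_closedBall, dist_zero_right, norm_smul]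
            have h1 : ‖(n:ℝ)⁻¹‖ = (n:ℝ)⁻¹ := Real.norm_of_nonneg (by positivity)
            rw [h1]
            have h2 : ‖emb d (E.walk n ω)‖ ≤ (n : ℝ) * E.L := hω.2
            calc (n:ℝ)⁻¹ * ‖emb d (E.walk n ω)‖ ≤ (n:ℝ)⁻¹ * ((n:ℝ) * E.L) :=
                  mul_le_mul_of_nonneg_left h2 (by positivity)
              _ = E.L := by field_simp
          · exact hω.1
        have hcov := ht hvK
        rw [Set.mem_iUnion₂] at hcov
        obtain ⟨i, hit, hib⟩ := hcov
        exact Set.mem_biUnion hit hib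
      calc ∫ ω in ((Ev E (Metric.ball y δ) n)ᶜ ∩ Ω₀ n : Set Ω), f n ω ∂E.P
          ≤ ∫ ω in ⋃ j ∈ t, Ev E (Metric.ball (j : EuclideanSpace ℝ (Fin d)) (ρf j)) n,
              f n ω ∂E.P :=
            setIntegral_mono_set hint.integrableOn (ae_restrict_of_ae hfnn)
              (HasSubset.Subset.eventuallyLE hsub)
        _ ≤ ∑ j ∈ t, ∫ ω in Ev E (Metric.ball (j : EuclideanSpace ℝ (Fin d)) (ρf j)) n,
              f n ω ∂E.P :=
            setIntegral_biUnion_le E hint hfnn t _ (fun j => Ev_meas E measurableSet_ball n)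
        _ ≤ ∑ j ∈ t, Real.exp (-((n:ℝ) * cf j)) * psi E (μf j) n :=
            Finset.sum_le_sum fun j hjt => hWj j hjt n hn1
        _ = (∑ j ∈ t, q j n) * psi E lam n := by
            rw [Finset.sum_mul]
            refine Finset.sum_congr rfl fun j _ => ?_
            have hqn : q j n = Real.exp (-((n:ℝ) * cf j)) * psi E (μf j) n / psi E lam n := rfl
            rw [hqn, div_mul_cancel₀]
            exact (psi_pos E lam n).ne'
        _ ≤ (1/2) * psi E lam n :=
            mul_le_mul_of_nonneg_right hn2.le (psi_pos E lam n).le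
        _ = psi E lam n / 2 := by ring
    have hball_ge : psi E lam n / 2 ≤ ∫ ω in Ev E (Metric.ball y δ) n, f n ω ∂E.P := by
      linarith
    have hub : ∫ ω in Ev E (Metric.ball y δ) n, f n ω ∂E.P ≤
        Real.exp ((n:ℝ) * a) * (E.P (Ev E (Metric.ball y δ) n)).toReal := by
      have hpt : ∀ ω ∈ Ev E (Metric.ball y δ) n, f n ω ≤ Real.exp ((n:ℝ) * a) := by
        intro ω hω
        have hfω : f n ω = Real.exp ((inner ℝ lam (emb d (E.walk n ω)) : ℝ)) := rfl
        rw [hfω]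
        apply Real.exp_le_exp.mpr
        set v := (n:ℝ)⁻¹ • emb d (E.walk n ω) with hv
        have hinner : (inner ℝ lam (emb d (E.walk n ω)) : ℝ) = (n:ℝ) * (inner ℝ lam v : ℝ) := by
          rw [hv, real_inner_smul_right]
          field_simp
        have ha' : a = (inner ℝ lam y : ℝ) + δ * ‖lam‖ := rfl
        rw [hinner, ha']
        refine mul_le_mul_of_nonneg_left ?_ hn0.le
        have h1 : (inner ℝ lam v : ℝ) = (inner ℝ lam y : ℝ) + (inner ℝ lam (v - y) : ℝ) := by
          rw [← inner_add_right]
          congr 1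
          abel
        have h2 : |(inner ℝ lam (v - y) : ℝ)| ≤ ‖lam‖ * δ := by
          refine (abs_real_inner_le_norm _ _).trans ?_
          have h3 : ‖v - y‖ ≤ δ := by
            rw [← dist_eq_norm]
            exact (Metric.mem_ball.mp hω).le
          exact mul_le_mul_of_nonneg_left h3 (norm_nonneg _)
        have h4 := le_abs_self ((inner ℝ lam (v - y) : ℝ))
        have h5 : ‖lam‖ * δ = δ * ‖lam‖ := mul_comm _ _
        linarith
      calc ∫ ω in Ev E (Metric.ball y δ) n, f n ω ∂E.P
          ≤ ∫ ω in Ev E (Metric.ball y δ) n, Real.exp ((n:ℝ) * a) ∂E.P :=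
            setIntegral_mono_on hint.integrableOn (integrable_const _).integrableOn
              (Ev_meas E measurableSet_ball n) hpt
        _ = (E.P (Ev E (Metric.ball y δ) n)).toReal * Real.exp ((n:ℝ) * a) := by
            rw [setIntegral_const, smul_eq_mul]
            rfl
        _ = Real.exp ((n:ℝ) * a) * (E.P (Ev E (Metric.ball y δ) n)).toReal := mul_comm _ _
    have hPm : (E.P (Ev E (Metric.ball y δ) n)).toReal ≤ (E.P (Ev E G n)).toReal :=
      ENNReal.toReal_mono (measure_ne_top _ _) (measure_mono fun ω hω => hball hω)
    have hchain : psi E lam n / 2 ≤ Real.exp ((n:ℝ) * a) * (E.P (Ev E G n)).toReal := by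
      calc psi E lam n / 2 ≤ ∫ ω in Ev E (Metric.ball y δ) n, f n ω ∂E.P := hball_ge
        _ ≤ Real.exp ((n:ℝ) * a) * (E.P (Ev E (Metric.ball y δ) n)).toReal := hub
        _ ≤ Real.exp ((n:ℝ) * a) * (E.P (Ev E G n)).toReal :=
            mul_le_mul_of_nonneg_left hPm (Real.exp_pos _).le
    rw [Real.exp_neg, inv_mul_le_iff₀ (Real.exp_pos _)]
    exact hchain
  -- conclude via liminf
  have hrate_ev : ∀ᶠ n : ℕ in Filter.atTop,
      ((-a + rr E lam n - (n:ℝ)⁻¹ * Real.log 2 : ℝ) : EReal) ≤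
        E.rate (fun n => {ω | (n : ℝ)⁻¹ • emb d (E.walk n ω) ∈ G}) n := by
    filter_upwards [hmain, Filter.eventually_ge_atTop 1] with n hn hn1
    have hn0 : (0:ℝ) < n := by exact_mod_cast hn1
    have hlb_pos : 0 < Real.exp (-((n:ℝ) * a)) * (psi E lam n / 2) :=
      mul_pos (Real.exp_pos _) (div_pos (psi_pos E lam n) two_pos)
    have hp_pos : 0 < (E.P (Ev E G n)).toReal := lt_of_lt_of_le hlb_pos hn
    have hlog : E.plog (Ev E G n) = ((Real.log ((E.P (Ev E G n)).toReal) : ℝ) : EReal) := by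
      have h1 : E.P (Ev E G n) = ENNReal.ofReal ((E.P (Ev E G n)).toReal) :=
        (ENNReal.ofReal_toReal (measure_ne_top E.P _)).symm
      show ENNReal.log (E.P (Ev E G n)) = _
      conv_lhs => rw [h1]
      rw [ENNReal.log_ofReal, if_neg (not_le.mpr hp_pos)]
    have hrn : E.rate (fun n => {ω | (n : ℝ)⁻¹ • emb d (E.walk n ω) ∈ G}) n
        = (((n:ℝ)⁻¹ * Real.log ((E.P (Ev E G n)).toReal) : ℝ) : EReal) := by
      show (((n : ℝ)⁻¹ : ℝ) : EReal) * E.plog (Ev E G n) = _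
      rw [hlog, ← EReal.coe_mul]
    rw [hrn]
    apply EReal.coe_le_coe_iff.mpr
    have hlogle : Real.log (Real.exp (-((n:ℝ) * a)) * (psi E lam n / 2)) ≤
        Real.log ((E.P (Ev E G n)).toReal) := Real.log_le_log hlb_pos hn
    have hexpand : Real.log (Real.exp (-((n:ℝ) * a)) * (psi E lam n / 2))
        = -((n:ℝ) * a) + Real.log (psi E lam n) - Real.log 2 := by
      rw [Real.log_mul (Real.exp_pos _).ne' (div_pos (psi_pos E lam n) two_pos).ne',
        Real.log_exp, Real.log_div (psi_pos E lam n).ne' two_ne_zero]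
      ring
    have hrr : rr E lam n = (n:ℝ)⁻¹ * Real.log (psi E lam n) := rfl
    rw [hrr]
    have hmul := mul_le_mul_of_nonneg_left hlogle (by positivity : (0:ℝ) ≤ (n:ℝ)⁻¹)
    rw [hexpand] at hmul
    have heq2 : (n:ℝ)⁻¹ * (-((n:ℝ) * a) + Real.log (psi E lam n) - Real.log 2)
        = -a + (n:ℝ)⁻¹ * Real.log (psi E lam n) - (n:ℝ)⁻¹ * Real.log 2 := by
      field_simp
    rw [heq2] at hmul
    linarith
  have hw_to : Filter.Tendsto (fun n : ℕ => -a + rr E lam n - (n:ℝ)⁻¹ * Real.log 2)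
      Filter.atTop (nhds (-a + (Λ lam).toReal - 0)) := by
    refine ((tendsto_const_nhds (x := -a)).add (htend lam)).sub ?_
    simpa using (tendsto_inv_atTop_nhds_zero_nat).mul_const (Real.log 2)
  have hlim : ((-a + (Λ lam).toReal : ℝ) : EReal) ≤
      Filter.liminf (E.rate fun n => {ω | (n : ℝ)⁻¹ • emb d (E.walk n ω) ∈ G})
        Filter.atTop := by
    have h1 : Filter.Tendsto
        (fun n : ℕ => ((-a + rr E lam n - (n:ℝ)⁻¹ * Real.log 2 : ℝ) : EReal))
        Filter.atTop (nhds ((-a + (Λ lam).toReal : ℝ) : EReal)) := by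
      apply EReal.tendsto_coe.mpr
      simpa using hw_to
    rw [← h1.liminf_eq]
    exact liminf_le_liminf hrate_ev
  refine le_trans ?_ hlim
  apply EReal.coe_le_coe_iff.mpr
  have ha' : a = (inner ℝ lam y : ℝ) + δ * ‖lam‖ := rfl
  linarith [ha'.ge, ha'.le]

end LDAux

/-- lower large deviation bound, Theorem `mainmain_theorem`: for every
open set `G`, `liminf (1/n) log ℙ(X_n/n ∈ G) ≥ − inf_{x ∈ G ∩ 𝓕} Λ*(x)`, where `𝓕` is the
set of exposed points of `Λ*` whose exposing hyperplane lies in the interior of the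
finiteness domain of `Λ`. -/
theorem ld_lower_bound (hd : 0 < d) (E : DWRE d Ω)
    (Λ : EuclideanSpace ℝ (Fin d) → EReal)
    (hΛ : ∀ lam : EuclideanSpace ℝ (Fin d),
      Filter.Tendsto (E.mgfRate lam) Filter.atTop (nhds (Λ lam))) :
    ∀ G : Set (EuclideanSpace ℝ (Fin d)), IsOpen G →
      -(⨅ x ∈ G ∩ {y : EuclideanSpace ℝ (Fin d) |
          ∃ lam ∈ interior {l' : EuclideanSpace ℝ (Fin d) | Λ l' < (⊤ : EReal)},
            ∀ x' : EuclideanSpace ℝ (Fin d), x' ≠ y →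
              (((inner ℝ lam x' : ℝ)) : EReal) - conj Λ x' <
                (((inner ℝ lam y : ℝ)) : EReal) - conj Λ y},
          conj Λ x) ≤
        Filter.liminf
          (E.rate fun n => {ω | (n : ℝ)⁻¹ • emb d (E.walk n ω) ∈ G}) Filter.atTop := by
  intro G hG
  rw [EReal.neg_le]
  refine le_iInf fun y => le_iInf fun hy => ?_
  rw [EReal.neg_le]
  obtain ⟨hyG, lam, _, hexp⟩ := hy
  have hfin : ∀ θ, Λ θ = ((Λ θ).toReal : EReal) := fun θ => (LDAux.lam_real E Λ hΛ θ).1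
  have hzero : Λ 0 = 0 := LDAux.lam_zero E Λ hΛ
  have h0le : (0 : EReal) ≤ conj Λ y := by
    simp only [DWRE.conj]
    refine le_iSup_of_le 0 ?_
    rw [hzero]
    simp
  by_cases htop : conj Λ y = ⊤
  · rw [htop]
    simp
  have hynb : conj Λ y ≠ ⊥ := fun hb => by
    rw [hb] at h0le
    exact absurd h0le (by simp)
  have hIy : conj Λ y = (((conj Λ y).toReal : ℝ) : EReal) := (EReal.coe_toReal htop hynb).symm
  have hIy_ge : (inner ℝ lam y : ℝ) - (Λ lam).toReal ≤ (conj Λ y).toReal := by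
    have h1 : (((inner ℝ lam y : ℝ)) : EReal) - Λ lam ≤ conj Λ y :=
      le_iSup (fun μ => (((inner ℝ μ y : ℝ)) : EReal) - Λ μ) lam
    rw [hfin lam, ← EReal.coe_sub, hIy] at h1
    exact EReal.coe_le_coe_iff.mp h1
  have hstep : ∀ x : EuclideanSpace ℝ (Fin d), x ≠ y →
      ∃ μ : EuclideanSpace ℝ (Fin d),
        (inner ℝ lam x : ℝ) - (Λ lam).toReal < (inner ℝ μ x : ℝ) - (Λ μ).toReal := by
    intro x hx
    have h1 := hexp x hx
    have h2 : (((inner ℝ lam x : ℝ)) : EReal) - conj Λ x < (((Λ lam).toReal : ℝ) : EReal) := by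
      refine lt_of_lt_of_le h1 ?_
      rw [hIy, ← EReal.coe_sub]
      exact EReal.coe_le_coe_iff.mpr (by linarith)
    have hxnb : conj Λ x ≠ ⊥ := by
      intro hb
      rw [hb, EReal.coe_sub_bot] at h2
      exact absurd h2 (by simp)
    have h3 : (((inner ℝ lam x : ℝ) - (Λ lam).toReal : ℝ) : EReal) < conj Λ x := by
      by_cases hxt : conj Λ x = ⊤
      · rw [hxt]
        exact EReal.coe_lt_top _
      · have hc := EReal.coe_toReal hxt hxnb
        rw [← hc, ← EReal.coe_sub] at h2
        rw [← hc]
        have h2' := EReal.coe_lt_coe_iff.mp h2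
        exact EReal.coe_lt_coe_iff.mpr (by linarith)
    have h4 : (((inner ℝ lam x : ℝ) - (Λ lam).toReal : ℝ) : EReal) <
        ⨆ μ : EuclideanSpace ℝ (Fin d), (((inner ℝ μ x : ℝ)) : EReal) - Λ μ := h3
    obtain ⟨μ, hμ⟩ := lt_iSup_iff.mp h4
    refine ⟨μ, ?_⟩
    rw [hfin μ, ← EReal.coe_sub] at hμ
    have h5 := EReal.coe_lt_coe_iff.mp hμ
    linarith
  obtain ⟨δ0, hδ0, hball0⟩ := Metric.isOpen_iff.mp hG y hyG
  have hkey : ∀ k : ℕ,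
      (((Λ lam).toReal - (inner ℝ lam y : ℝ) - (δ0 / ((k : ℝ) + 1)) * ‖lam‖ : ℝ) : EReal) ≤
        Filter.liminf (E.rate fun n => {ω | (n : ℝ)⁻¹ • emb d (E.walk n ω) ∈ G})
          Filter.atTop := by
    intro k
    refine LDAux.key_liminf E Λ hΛ G y lam hstep (δ0 / ((k : ℝ) + 1)) (by positivity) ?_
    refine (Metric.ball_subset_ball ?_).trans hball0
    exact div_le_self hδ0.le (by norm_num)
  have hto : Filter.Tendsto
      (fun k : ℕ =>
        (((Λ lam).toReal - (inner ℝ lam y : ℝ) - (δ0 / ((k : ℝ) + 1)) * ‖lam‖ : ℝ) : EReal))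
      Filter.atTop (nhds (((Λ lam).toReal - (inner ℝ lam y : ℝ) : ℝ) : EReal)) := by
    apply EReal.tendsto_coe.mpr
    have hδto : Filter.Tendsto (fun k : ℕ => δ0 / ((k : ℝ) + 1)) Filter.atTop (nhds 0) :=
      Filter.Tendsto.div_atTop tendsto_const_nhds
        (tendsto_atTop_add_const_right _ 1 tendsto_natCast_atTop_atTop)
    have h6 := (tendsto_const_nhds (x := (Λ lam).toReal - (inner ℝ lam y : ℝ))).sub
      (hδto.mul_const ‖lam‖)
    simpa using h6
  have hfinal : (((Λ lam).toReal - (inner ℝ lam y : ℝ) : ℝ) : EReal) ≤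
      Filter.liminf (E.rate fun n => {ω | (n : ℝ)⁻¹ • emb d (E.walk n ω) ∈ G})
        Filter.atTop :=
    le_of_tendsto hto (Filter.Eventually.of_forall hkey)
  refine le_trans ?_ hfinal
  rw [hIy, ← EReal.coe_neg]
  exact EReal.coe_le_coe_iff.mpr (by linarith)
end
end
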